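/- arXiv:1602.08608 — 10 statements merged into one kernel-verified Lean document; each statement's English description precedes it below -/
import Mathlib

section
/- Let H be a separable Hilbert space decomposed as H = H₁ ⊕ ⋯ ⊕ H_κ (κ finite), let ℓ ∈ ℕ, and let x₁, …, x_m ∈ H. Consider the class D_ℓ of subspaces S ⊆ H with dim S ≤ ℓ and P_{H_i}(S) ⊆ S for all i. Then there exists S* ∈ D_ℓ such that Σ_{j=1}^m ‖x_j − P_{S*} x_j‖² ≤ Σ_{j=1}^m ‖x_j − P_S x_j‖² for every S ∈ D_ℓ. -/
open scoped ComplexInnerProductSpace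

section Aux

variable {E : Type*} [NormedAddCommGroup E] [InnerProductSpace ℂ E]

/-- Notation shortcut: the orthogonal projection as an endomorphism of `E`. -/
noncomputable def auxProj (U : Submodule ℂ E) [CompleteSpace U] : E →L[ℂ] E :=
  U.subtypeL.comp (Submodule.orthogonalProjectionOnto U)

lemma auxProj_apply_mem (U : Submodule ℂ E) [CompleteSpace U] (v : E) :
    auxProj U v ∈ U := (Submodule.orthogonalProjectionOnto U v).2

lemma auxProj_apply_eq_self (U : Submodule ℂ E) [CompleteSpace U] {v : E} (hv : v ∈ U) :
    auxProj U v = v := by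
  simpa [auxProj] using Submodule.starProjection_eq_self_iff.mpr hv

lemma auxProj_idem (U : Submodule ℂ E) [CompleteSpace U] :
    auxProj U * auxProj U = auxProj U := by
  ext v
  exact auxProj_apply_eq_self U (auxProj_apply_mem U v)

lemma auxProj_sa [CompleteSpace E] (U : Submodule ℂ E) [CompleteSpace U] :
    IsSelfAdjoint (auxProj U) := by
  exact isSelfAdjoint_starProjection (𝕜 := ℂ) U

lemma auxProj_min (U : Submodule ℂ E) [CompleteSpace U] (y : E) {u : E} (hu : u ∈ U) :
    ‖y - auxProj U y‖ ≤ ‖y - u‖ := by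
  have h := Submodule.starProjection_minimal (U := U) y
  rw [Submodule.starProjection_apply] at h
  have : ‖y - (Submodule.orthogonalProjectionOnto U y : E)‖ ≤ ‖y - u‖ := by
    rw [h]
    exact ciInf_le ⟨0, fun r ⟨v, hv⟩ => hv ▸ norm_nonneg _⟩ (⟨u, hu⟩ : U)
  simpa [auxProj] using this

lemma auxProj_norm_apply_le (U : Submodule ℂ E) [CompleteSpace U] (y : E) :
    ‖auxProj U y‖ ≤ ‖y‖ := by
  have h1 : ‖auxProj U y‖ = ‖Submodule.orthogonalProjectionOnto U y‖ := by
    simp [auxProj]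
  rw [h1]
  calc ‖Submodule.orthogonalProjectionOnto U y‖ ≤ ‖Submodule.orthogonalProjectionOnto U‖ * ‖y‖ :=
        (Submodule.orthogonalProjectionOnto U).le_opNorm y
    _ ≤ 1 * ‖y‖ := by
        have := Submodule.orthogonalProjectionOnto_norm_le U
        have hy := norm_nonneg y
        nlinarith
    _ = ‖y‖ := one_mul _

/-- If `P` is a self-adjoint idempotent, `Q` is self-adjoint, and the range of `P` is
invariant under `Q`, then `P` and `Q` commute. -/
lemma aux_comm [CompleteSpace E] (P Q : E →L[ℂ] E) (hP : IsSelfAdjoint P)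
    (hQ : IsSelfAdjoint Q) (hPi : P * P = P)
    (hinv : ∀ v : E, P (Q (P v)) = Q (P v)) : P * Q = Q * P := by
  have h1 : P * (Q * P) = Q * P := by
    ext v
    simpa [ContinuousLinearMap.mul_apply] using hinv v
  have h2 : P * Q * P = P * Q := by
    have h := congrArg star h1
    simp only [star_mul, hP.star_eq, hQ.star_eq] at h
    simpa [mul_assoc] using h
  calc P * Q = P * Q * P := h2.symm
    _ = P * (Q * P) := by rw [mul_assoc]
    _ = Q * P := h1

end Aux

set_option maxHeartbeats 2000000
set_option synthInstance.maxHeartbeats 1000000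

/-- Existence of an optimal subspace in the class `D_ℓ` of subspaces of dimension at most
`ℓ` that are invariant under the projections of an orthogonal decomposition
`H = H₁ ⊕ ⋯ ⊕ H_κ`: there is `S* ∈ D_ℓ` minimizing `Σⱼ ‖xⱼ − P_S xⱼ‖²` (expressed via
distances, since `‖x − P_S x‖ = dist x S` for a closed subspace). -/
theorem exists_optimal_decomposable_subspace
    {H : Type*} [NormedAddCommGroup H] [InnerProductSpace ℂ H] [CompleteSpace H]
    [SecondCountableTopology H]
    (κ : ℕ) (Hsub : Fin κ → Submodule ℂ H) [instH : ∀ i, CompleteSpace (Hsub i)]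
    (horth : ∀ i j, i ≠ j → ∀ x ∈ Hsub i, ∀ y ∈ Hsub j, ⟪x, y⟫ = 0)
    (hspan : (⨆ i, Hsub i).topologicalClosure = ⊤)
    (ℓ m : ℕ) (x : Fin m → H) :
    ∃ Sstar : Submodule ℂ H, FiniteDimensional ℂ Sstar ∧ Module.finrank ℂ Sstar ≤ ℓ ∧
      (∀ i, Sstar.map
        (((Hsub i).subtypeL.comp (Hsub i).orthogonalProjectionOnto).toLinearMap) ≤ Sstar) ∧
      ∀ S : Submodule ℂ H, FiniteDimensional ℂ S → Module.finrank ℂ S ≤ ℓ →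
        (∀ i, S.map
          (((Hsub i).subtypeL.comp (Hsub i).orthogonalProjectionOnto).toLinearMap) ≤ S) →
        ∑ j, (Metric.infDist (x j) (Sstar : Set H)) ^ 2 ≤
          ∑ j, (Metric.infDist (x j) (S : Set H)) ^ 2 := by
  classical
  -- the projections onto the pieces
  set Pb : Fin κ → (H →L[ℂ] H) := fun i => auxProj (Hsub i) with hPb_def
  have hPb_sa : ∀ i, IsSelfAdjoint (Pb i) := fun i => auxProj_sa _
  have hPb_idem : ∀ i (y : H), Pb i (Pb i y) = Pb i y := fun i y =>
    auxProj_apply_eq_self _ (auxProj_apply_mem _ y)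
  have hPb_orth : ∀ i k, i ≠ k → ∀ y : H, Pb i (Pb k y) = 0 := by
    intro i k hik y
    have hmem : Pb k y ∈ (Hsub i)ᗮ := by
      rw [Submodule.mem_orthogonal]
      intro u hu
      exact horth i k hik u hu (Pb k y) (auxProj_apply_mem _ y)
    have hmem' : (((Submodule.orthogonalProjectionOnto (Hsub k)) y : Hsub k) : H) ∈ (Hsub i)ᗮ := by
      simpa [Pb, auxProj] using hmem
    have : Submodule.orthogonalProjectionOnto (Hsub i)
        (((Submodule.orthogonalProjectionOnto (Hsub k)) y : Hsub k) : H) = 0 :=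
      Submodule.orthogonalProjectionOnto_apply_of_mem_orthogonal hmem'
    exact (congrArg (fun z : Hsub i => (z : H)) this).trans (by simp)
  -- the finite-dimensional ambient subspace W
  set G : Set H := Set.range x ∪ Set.range (fun p : Fin κ × Fin m => Pb p.1 (x p.2)) with hG_def
  have hGfin : G.Finite := (Set.finite_range x).union (Set.finite_range _)
  set W : Submodule ℂ H := Submodule.span ℂ G with hW_def
  haveI : FiniteDimensional ℂ W := FiniteDimensional.span_of_finite ℂ hGfin
  haveI : CompleteSpace W := FiniteDimensional.complete ℂ W
  have hxW : ∀ j, x j ∈ W := fun j => Submodule.subset_span (Or.inl ⟨j, rfl⟩)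
  have hWinv : ∀ i, ∀ y ∈ W, Pb i y ∈ W := by
    intro i y hy
    have hle : W.map (Pb i).toLinearMap ≤ W := by
      rw [hW_def, Submodule.map_span, Submodule.span_le]
      rintro z ⟨g, hg, rfl⟩
      rcases hg with h | h
      · obtain ⟨j, rfl⟩ := h
        exact Submodule.subset_span (Or.inr ⟨(i, j), rfl⟩)
      · obtain ⟨⟨k, j⟩, rfl⟩ := h
        by_cases hik : i = k
        · subst hik
          simpa [hPb_idem i (x j)] using
            (Submodule.subset_span (R := ℂ) (Or.inr ⟨(i, j), rfl⟩) : Pb i (x j) ∈ W)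
        · simpa [hPb_orth i k hik (x j)] using (Submodule.zero_mem W)
    exact hle ⟨y, hy, rfl⟩
  clear_value W
  -- the projection onto W commutes with the Pb i
  set PW : H →L[ℂ] H := auxProj W with hPW_def
  have hcomm : ∀ i, PW * Pb i = Pb i * PW := by
    intro i
    exact aux_comm PW (Pb i) (auxProj_sa W) (hPb_sa i) (auxProj_idem W) (fun v =>
      auxProj_apply_eq_self W (hWinv i _ (auxProj_apply_mem W v)))
  -- the restrictions of the Pb i to W
  set QL : Fin κ → (W →L[ℂ] W) := fun i =>
    LinearMap.toContinuousLinearMap ((Pb i).toLinearMap.restrict (hWinv i)) with hQL_def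
  have hQL_coe : ∀ i (u : W), (QL i u : H) = Pb i (u : H) := by
    intro i u
    simp [QL, LinearMap.restrict_apply]
  have hQL_sa : ∀ i, IsSelfAdjoint (QL i) := by
    intro i
    rw [ContinuousLinearMap.isSelfAdjoint_iff_isSymmetric]
    intro u v
    have hsym := (hPb_sa i).isSymmetric (u : H) (v : H)
    simpa [Submodule.coe_inner, hQL_coe] using hsym
  -- the vectors inside W
  set w : Fin m → W := fun j => ⟨x j, hxW j⟩ with hw_def
  -- complex trace as a continuous function
  set tr : (W →L[ℂ] W) → ℂ := fun P => LinearMap.trace ℂ W P.toLinearMap with htr_def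
  have htr_cont : Continuous tr := by
    have : tr = ⇑((LinearMap.trace ℂ W).comp (ContinuousLinearMap.coeLM ℂ)) := rfl
    rw [this]
    exact LinearMap.continuous_of_finiteDimensional _
  -- the compact parameter set
  set K : Set (W →L[ℂ] W) :=
    {P | IsSelfAdjoint P} ∩ {P | P * P = P} ∩ {P | (tr P).re ≤ (ℓ : ℝ)} ∩
      ⋂ i, {P | P * QL i = QL i * P} with hK_def
  haveI : ContinuousMul (W →L[ℂ] W) :=
    @NonUnitalSeminormedRing.toContinuousMul (W →L[ℂ] W) _
  have hKclosed : IsClosed K := by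
    refine (((?_ : IsClosed {P : W →L[ℂ] W | IsSelfAdjoint P}).inter ?_).inter ?_).inter ?_
    · have heq : {P : W →L[ℂ] W | IsSelfAdjoint P}
          = {P | ContinuousLinearMap.adjoint P = P} := by
        ext P
        exact ContinuousLinearMap.isSelfAdjoint_iff'
      rw [heq]
      exact isClosed_eq (ContinuousLinearMap.adjoint (E := W) (F := W)).continuous continuous_id
    · exact isClosed_eq (continuous_id.mul continuous_id) continuous_id
    · exact IsClosed.preimage (Complex.continuous_re.comp htr_cont) isClosed_Iic
    · exact isClosed_iInter fun i =>
        isClosed_eq (continuous_id.mul continuous_const) (continuous_const.mul continuous_id)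
  have hKball : ∀ P ∈ K, ‖P‖ ≤ 1 := by
    rintro P ⟨⟨⟨hsa, hidem⟩, -⟩, -⟩
    have h1 : ‖P‖ = ‖P‖ * ‖P‖ := by
      have := CStarRing.norm_star_mul_self (x := P)
      rw [hsa.star_eq] at this
      rw [show P * P = P from hidem] at this
      exact this
    have hn : ‖P‖ ≤ 1 := by nlinarith [norm_nonneg P, h1]
    exact hn
  haveI : ProperSpace (W →L[ℂ] W) := FiniteDimensional.proper ℂ (W →L[ℂ] W)
  have hKbounded : Bornology.IsBounded K :=
    isBounded_iff_forall_norm_le.mpr ⟨1, hKball⟩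
  have hKcompact : IsCompact K :=
    Metric.isCompact_of_isClosed_isBounded hKclosed hKbounded
  have hKne : K.Nonempty := by
    refine ⟨0, ⟨⟨?_, by simp⟩, ?_⟩, ?_⟩
    · exact IsSelfAdjoint.zero (↥W →L[ℂ] ↥W)
    · simp [tr]
    · simp
  -- the objective function
  set f : (W →L[ℂ] W) → ℝ := fun P => ∑ j, ‖w j - P (w j)‖ ^ 2 with hf_def
  have hfcont : Continuous f := by
    apply continuous_finset_sum
    intro j _
    exact (continuous_const.sub (ContinuousLinearMap.apply ℂ W (w j)).continuous).norm.pow 2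
  obtain ⟨Pstar, hPstarK, hPstarMin⟩ := hKcompact.exists_isMinOn hKne hfcont.continuousOn
  obtain ⟨⟨⟨hPstar_sa, hPstar_idem⟩, hPstar_tr⟩, hPstar_comm'⟩ := hPstarK
  have hPstar_comm : ∀ i, Pstar * QL i = QL i * Pstar := by
    intro i
    have := Set.mem_iInter.mp hPstar_comm' i
    exact this
  have hPstar_fix : ∀ u : W, u ∈ LinearMap.range Pstar.toLinearMap → Pstar u = u := by
    rintro u ⟨v, rfl⟩
    have := congrArg (fun (T : W →L[ℂ] W) => T v) hPstar_idem
    simpa [ContinuousLinearMap.mul_apply] using this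
  -- trace = rank for idempotents
  have htrace_rank : ∀ P : W →L[ℂ] W, P * P = P →
      tr P = (Module.finrank ℂ (LinearMap.range P.toLinearMap) : ℂ) := by
    intro P hidem
    have hproj : LinearMap.IsProj (LinearMap.range P.toLinearMap) P.toLinearMap := by
      refine ⟨fun v => LinearMap.mem_range_self _ v, ?_⟩
      rintro v ⟨u, rfl⟩
      have := congrArg (fun (T : W →L[ℂ] W) => T u) hidem
      simpa [ContinuousLinearMap.mul_apply] using this
    exact hproj.trace
  -- build Sstar
  set Rstar : Submodule ℂ W := LinearMap.range Pstar.toLinearMap with hRstar_def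
  refine ⟨Rstar.map W.subtype, ?_, ?_, ?_, ?_⟩
  · exact Module.Finite.map _ _
  · rw [Submodule.finrank_map_subtype_eq]
    have h1 := htrace_rank Pstar hPstar_idem
    have htr' : (tr Pstar).re ≤ (ℓ : ℝ) := hPstar_tr
    rw [h1] at htr'
    exact_mod_cast (by simpa using htr' : ((Module.finrank ℂ Rstar : ℝ)) ≤ (ℓ : ℝ))
  · -- invariance of Sstar
    intro i
    rintro _ ⟨_, ⟨u, hu, rfl⟩, rfl⟩
    refine Submodule.mem_map.mpr ⟨QL i u, ?_, (hQL_coe i u).symm⟩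
    obtain ⟨v, rfl⟩ := hu
    refine ⟨QL i v, ?_⟩
    have := congrArg (fun (T : W →L[ℂ] W) => T v) (hPstar_comm i)
    simpa [ContinuousLinearMap.mul_apply] using this
  · -- optimality
    intro S hSfin hSrank hSinv
    haveI := hSfin
    -- step 1: Σ infDist(x j, Sstar)² ≤ f Pstar
    have step1 : ∑ j, (Metric.infDist (x j) ((Rstar.map W.subtype : Submodule ℂ H) : Set H)) ^ 2
        ≤ f Pstar := by
      apply Finset.sum_le_sum
      intro j _
      have hmem : ((Pstar (w j) : W) : H) ∈ (Rstar.map W.subtype : Submodule ℂ H) :=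
        Submodule.mem_map.mpr ⟨Pstar (w j), LinearMap.mem_range_self _ _, rfl⟩
      have hle : Metric.infDist (x j) ((Rstar.map W.subtype : Submodule ℂ H) : Set H)
          ≤ ‖w j - Pstar (w j)‖ := by
        have h1 := Metric.infDist_le_dist_of_mem (x := x j) hmem
        have h2 : dist (x j) ((Pstar (w j) : W) : H) = ‖w j - Pstar (w j)‖ := by
          rw [dist_eq_norm]
          have : x j - ((Pstar (w j) : W) : H) = ((w j - Pstar (w j) : W) : H) := by
            simp [hw_def]
          rw [this]
          simp
        rwa [h2] at h1
      exact pow_le_pow_left₀ Metric.infDist_nonneg hle 2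
    -- step 2: construct the competitor projection PS and show f Pstar ≤ f PS
    set pr : H →ₗ[ℂ] W := (Submodule.orthogonalProjectionOnto W).toLinearMap with hpr_def
    set S'' : Submodule ℂ W := S.map pr with hS''_def
    haveI : FiniteDimensional ℂ S'' := Module.Finite.map _ _
    haveI : CompleteSpace S'' := FiniteDimensional.complete ℂ S''
    set PS : W →L[ℂ] W := auxProj S'' with hPS_def
    have hS''inv : ∀ i, ∀ z ∈ S'', QL i z ∈ S'' := by
      intro i z hz
      obtain ⟨s, hs, rfl⟩ := hz
      have hPbs : Pb i s ∈ S := hSinv i ⟨s, hs, rfl⟩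
      refine ⟨Pb i s, hPbs, ?_⟩
      apply Subtype.ext
      have hcoe1 : ((pr (Pb i s) : W) : H) = PW (Pb i s) := rfl
      have hcoe2 : ((QL i (pr s) : W) : H) = Pb i (PW s) := by
        rw [hQL_coe]
        rfl
      rw [hcoe1, hcoe2]
      have := congrArg (fun (T : H →L[ℂ] H) => T s) (hcomm i)
      simpa [ContinuousLinearMap.mul_apply] using this
    have hPSK : PS ∈ K := by
      refine ⟨⟨⟨auxProj_sa _, auxProj_idem _⟩, ?_⟩, Set.mem_iInter.mpr fun i => ?_⟩
      · -- trace bound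
        show (tr PS).re ≤ (ℓ : ℝ)
        have h1 := htrace_rank PS (auxProj_idem _)
        have hrange : LinearMap.range PS.toLinearMap = S'' := by
          apply le_antisymm
          · rintro _ ⟨v, rfl⟩
            exact auxProj_apply_mem S'' v
          · intro z hz
            exact ⟨z, auxProj_apply_eq_self S'' hz⟩
        rw [hrange] at h1
        have hle : Module.finrank ℂ S'' ≤ ℓ :=
          le_trans (Submodule.finrank_map_le pr S) hSrank
        rw [h1]
        simpa using (Nat.cast_le.mpr hle : (Module.finrank ℂ S'' : ℝ) ≤ (ℓ : ℝ))
      · -- commutation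
        exact aux_comm PS (QL i) (auxProj_sa _) (hQL_sa i) (auxProj_idem _) (fun v =>
          auxProj_apply_eq_self S'' (hS''inv i _ (auxProj_apply_mem S'' v)))
    have step2 : f Pstar ≤ f PS := hPstarMin hPSK
    -- step 3: f PS ≤ Σ infDist(x j, S)²
    have step3 : f PS ≤ ∑ j, (Metric.infDist (x j) (S : Set H)) ^ 2 := by
      apply Finset.sum_le_sum
      intro j _
      have hle : ‖w j - PS (w j)‖ ≤ Metric.infDist (x j) (S : Set H) := by
        rw [Metric.infDist_eq_iInf]
        apply le_ciInf
        rintro ⟨s, hs⟩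
        have h1 : ‖w j - PS (w j)‖ ≤ ‖w j - pr s‖ :=
          auxProj_min S'' (w j) ⟨s, hs, rfl⟩
        have h2 : ‖w j - pr s‖ = ‖PW (x j) - PW s‖ := by
          have hc : ((w j - pr s : W) : H) = PW (x j) - PW s := by
            have e1 : ((w j : W) : H) = PW (x j) := (auxProj_apply_eq_self W (hxW j)).symm
            have e2 : ((pr s : W) : H) = PW s := rfl
            rw [Submodule.coe_sub, e1, e2]
          rw [← hc]
          simp
        have h3 : ‖PW (x j) - PW s‖ = ‖PW (x j - s)‖ := by rw [map_sub]
        have h4 : ‖PW (x j - s)‖ ≤ ‖x j - s‖ := auxProj_norm_apply_le W _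
        have h5 : dist (x j) s = ‖x j - s‖ := dist_eq_norm _ _
        calc ‖w j - PS (w j)‖ ≤ ‖w j - pr s‖ := h1
          _ = ‖PW (x j - s)‖ := by rw [h2, h3]
          _ ≤ ‖x j - s‖ := h4
          _ = dist (x j) s := h5.symm
      exact pow_le_pow_left₀ (norm_nonneg _) hle 2
    exact le_trans step1 (le_trans step2 step3)
end

section
/- Let (Ω, μ) be a σ-finite measure space, H a separable Hilbert space, and J a measurable range function (ω ↦ J(ω), a closed subspace of H, with ω ↦ ⟨P_{J(ω)} a, b⟩ measurable for all a, b ∈ H). Let M = {Φ ∈ L²(Ω, H) : Φ(ω) ∈ J(ω) a.e.}. Then M is a closed subspace of L²(Ω, H) and for every Φ ∈ L²(Ω, H), the orthogonal projection satisfies (P_M Φ)(ω) = P_{J(ω)}(Φ(ω)) for a.e. ω ∈ Ω. -/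
open MeasureTheory
open scoped ComplexInnerProductSpace ENNReal

section Aux

open Filter Topology

/-- A function into a separable metric space is measurable provided all distances to
points are measurable. -/
lemma measurable_of_measurable_dist_aux {Ω E : Type*} [MeasurableSpace Ω] [MetricSpace E]
    [TopologicalSpace.SeparableSpace E] [Nonempty E] [MeasurableSpace E] [BorelSpace E]
    {f : Ω → E} (h : ∀ b : E, Measurable fun ω => dist (f ω) b) : Measurable f := by
  classical
  set u := TopologicalSpace.denseSeq E with hu_def
  have hu : DenseRange u := TopologicalSpace.denseRange_denseSeq E
  have hex : ∀ (n : ℕ) (ω : Ω), ∃ k, dist (f ω) (u k) < 1 / (n + 1 : ℝ) := by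
    intro n ω
    obtain ⟨k, hk⟩ := hu.exists_dist_lt (f ω) (by positivity : (0:ℝ) < 1 / (n + 1 : ℝ))
    exact ⟨k, hk⟩
  have hFmeas : ∀ n, Measurable fun ω => u (Nat.find (hex n ω)) := by
    intro n
    refine measurable_from_top.comp (measurable_find _ fun k => ?_)
    exact (h (u k)) measurableSet_Iio
  refine measurable_of_tendsto_metrizable hFmeas ?_
  rw [tendsto_pi_nhds]
  intro ω
  rw [Metric.tendsto_atTop]
  intro ε hε
  obtain ⟨N, hN⟩ := exists_nat_one_div_lt hε
  refine ⟨N, fun n hn => ?_⟩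
  have h1 := Nat.find_spec (hex n ω)
  have h2 : (1 : ℝ) / (n + 1) ≤ 1 / (N + 1) := by
    apply one_div_le_one_div_of_le (by positivity)
    exact_mod_cast Nat.succ_le_succ hn
  calc dist (u (Nat.find (hex n ω))) (f ω) = dist (f ω) (u (Nat.find (hex n ω))) :=
        dist_comm _ _
    _ < 1 / (n + 1 : ℝ) := h1
    _ ≤ 1 / (N + 1 : ℝ) := h2
    _ < ε := hN

end Aux

/-- Helson's lemma: for a measurable range function `J`, the set
`M = {Φ ∈ L²(Ω, H) : Φ(ω) ∈ J(ω) a.e.}` is a closed subspace and the orthogonal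
projection onto `M` acts pointwise, `(P_M Φ)(ω) = P_{J(ω)}(Φ(ω))` a.e. (the projection
`P_M Φ` being characterized as the unique `Ψ ∈ M` with `Φ − Ψ ⟂ M`). -/
theorem rangeFunction_space_closed_and_pointwise_projection
    {Ω : Type*} [MeasurableSpace Ω] (μ : Measure Ω) [SigmaFinite μ]
    {H : Type*} [NormedAddCommGroup H] [InnerProductSpace ℂ H] [CompleteSpace H]
    [SecondCountableTopology H]
    (J : Ω → Submodule ℂ H) [instJ : ∀ ω, CompleteSpace (J ω)]
    (hJmeas : ∀ a b : H, Measurable fun ω => ⟪((J ω).orthogonalProjection a : H), b⟫)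
    (M : Submodule ℂ (Lp H 2 μ))
    (hM : ∀ Φ : Lp H 2 μ, Φ ∈ M ↔ ∀ᵐ ω ∂μ, Φ ω ∈ J ω) :
    IsClosed (M : Set (Lp H 2 μ)) ∧
    ∀ Φ : Lp H 2 μ, ∃ Ψ ∈ M, (∀ X ∈ M, ⟪Φ - Ψ, X⟫ = 0) ∧
      ∀ᵐ ω ∂μ, Ψ ω = ((J ω).orthogonalProjection (Φ ω) : H) := by
  classical
  borelize H
  -- J ω is closed
  have hJclosed : ∀ ω, IsClosed (J ω : Set H) := fun ω =>
    (completeSpace_coe_iff_isComplete.mp (instJ ω)).isClosed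
  -- pointwise norm bound for the projections
  have hPnorm : ∀ (ω : Ω) (x : H), ‖((J ω).orthogonalProjection x : H)‖ ≤ ‖x‖ := by
    intro ω x
    calc ‖((J ω).orthogonalProjection x : H)‖ = ‖(J ω).orthogonalProjection x‖ := rfl
      _ ≤ ‖(J ω).orthogonalProjection‖ * ‖x‖ := ((J ω).orthogonalProjection).le_opNorm x
      _ ≤ 1 * ‖x‖ := by
          gcongr
          exact Submodule.orthogonalProjectionOnto_norm_le _
      _ = ‖x‖ := one_mul _
  -- measurability of ω ↦ P_{J ω} c for each fixed c
  have hPmeas : ∀ c : H, Measurable fun ω => ((J ω).orthogonalProjection c : H) := by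
    intro c
    apply measurable_of_measurable_dist_aux
    intro b
    have hsq : ∀ ω, dist (((J ω).orthogonalProjection c : H)) b =
        Real.sqrt (RCLike.re ⟪((J ω).orthogonalProjection c : H), c⟫
          - 2 * RCLike.re ⟪((J ω).orthogonalProjection c : H), b⟫ + ‖b‖ ^ 2) := by
      intro ω
      set x : H := ((J ω).orthogonalProjection c : H) with hx
      have h0 : ⟪x, c - x⟫ = 0 :=
        Submodule.inner_right_of_mem_orthogonal ((J ω).orthogonalProjection c).2
          (Submodule.sub_starProjection_mem_orthogonal (K := J ω) c)
      rw [inner_sub_right, sub_eq_zero] at h0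
      have hxx : RCLike.re ⟪x, c⟫ = ‖x‖ ^ 2 := by
        rw [h0, inner_self_eq_norm_sq]
      have : dist x b = Real.sqrt (‖x - b‖ ^ 2) := by
        rw [Real.sqrt_sq (norm_nonneg _), dist_eq_norm]
      rw [this, hxx]
      congr 1
      exact norm_sub_sq x b
    simp_rw [hsq]
    apply Measurable.sqrt
    apply Measurable.add
    · apply Measurable.sub
      · exact (RCLike.measurable_re.comp (hJmeas c c))
      · exact (RCLike.measurable_re.comp (hJmeas c b)).const_mul 2
    · exact measurable_const
  -- measurability of ω ↦ P_{J ω} (s ω) for simple functions s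
  have hPsimple : ∀ s : SimpleFunc Ω H,
      Measurable fun ω => ((J ω).orthogonalProjection (s ω) : H) := by
    intro s
    induction s using SimpleFunc.induction with
    | const c hs =>
      rename_i A
      have : (fun ω => ((J ω).orthogonalProjection
          ((SimpleFunc.piecewise A hs (SimpleFunc.const Ω c) (SimpleFunc.const Ω 0)) ω) : H))
          = Set.indicator A fun ω => ((J ω).orthogonalProjection c : H) := by
        ext ω
        by_cases hω : ω ∈ A <;>
          simp [SimpleFunc.piecewise_apply, hω, Set.indicator_apply]
      rw [this]
      exact (hPmeas c).indicator hs
    | add _ hf hg =>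
      rename_i f g hdisj
      have : (fun ω => ((J ω).orthogonalProjection ((f + g) ω) : H))
          = fun ω => ((J ω).orthogonalProjection (f ω) : H)
            + ((J ω).orthogonalProjection (g ω) : H) := by
        ext ω
        simp [map_add]
      rw [this]
      exact hf.add hg
  -- measurability of ω ↦ P_{J ω} (g ω) for strongly measurable g
  have hPcomp : ∀ g : Ω → H, StronglyMeasurable g →
      Measurable fun ω => ((J ω).orthogonalProjection (g ω) : H) := by
    intro g hg
    apply measurable_of_tendsto_metrizable (fun n => hPsimple (hg.approx n))
    rw [tendsto_pi_nhds]
    intro ω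
    have hcont : Continuous fun x : H => ((J ω).orthogonalProjection x : H) :=
      continuous_subtype_val.comp ((J ω).orthogonalProjection).continuous
    exact (hcont.tendsto (g ω)).comp (hg.tendsto_approx ω)
  -- the pointwise projection of an Lp function is in Lp
  have hmemLp : ∀ Φ : Lp H 2 μ,
      MemLp (fun ω => ((J ω).orthogonalProjection (Φ ω) : H)) 2 μ := by
    intro Φ
    have hΦ := Lp.aestronglyMeasurable Φ
    have hmeas : AEStronglyMeasurable (fun ω => ((J ω).orthogonalProjection (Φ ω) : H)) μ := by
      refine ⟨fun ω => ((J ω).orthogonalProjection (hΦ.mk _ ω) : H),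
        (hPcomp _ hΦ.stronglyMeasurable_mk).stronglyMeasurable, ?_⟩
      filter_upwards [hΦ.ae_eq_mk] with ω hω
      rw [hω]
    refine MemLp.of_le (Lp.memLp Φ) hmeas ?_
    filter_upwards with ω
    exact hPnorm ω (Φ ω)
  refine ⟨?_, ?_⟩
  · -- closedness
    refine IsSeqClosed.isClosed ?_
    intro f x hf hx
    have hmeasure : TendstoInMeasure μ (fun n => f n) Filter.atTop x :=
      tendstoInMeasure_of_tendsto_Lp hx
    obtain ⟨ns, _, hae⟩ := hmeasure.exists_seq_tendsto_ae
    have hmem : ∀ᵐ ω ∂μ, ∀ n, f n ω ∈ J ω := by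
      rw [MeasureTheory.ae_all_iff]
      exact fun n => (hM (f n)).mp (hf n)
    have hx' : x ∈ M := by
      rw [hM]
      filter_upwards [hae, hmem] with ω hω hωmem
      exact (hJclosed ω).mem_of_tendsto hω (Filter.Eventually.of_forall fun i => hωmem (ns i))
    exact hx'
  · -- pointwise projection
    intro Φ
    set g : Ω → H := fun ω => ((J ω).orthogonalProjection (Φ ω) : H) with hg_def
    have hg := hmemLp Φ
    set Ψ : Lp H 2 μ := hg.toLp g with hΨ_def
    have hΨcoe : Ψ =ᵐ[μ] g := MemLp.coeFn_toLp hg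
    have hΨmem : Ψ ∈ M := by
      rw [hM]
      filter_upwards [hΨcoe] with ω hω
      rw [hω]
      exact ((J ω).orthogonalProjection (Φ ω)).2
    refine ⟨Ψ, hΨmem, ?_, hΨcoe⟩
    intro X hX
    rw [MeasureTheory.L2.inner_def]
    have hXJ : ∀ᵐ ω ∂μ, X ω ∈ J ω := (hM X).mp hX
    have : ∀ᵐ ω ∂μ, ⟪(Φ - Ψ) ω, X ω⟫ = 0 := by
      filter_upwards [Lp.coeFn_sub Φ Ψ, hΨcoe, hXJ] with ω h1 h2 h3
      rw [h1, Pi.sub_apply, h2]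
      exact Submodule.inner_left_of_mem_orthogonal h3
        (Submodule.sub_starProjection_mem_orthogonal (K := J ω) (Φ ω))
    calc ∫ ω, ⟪(Φ - Ψ) ω, X ω⟫ ∂μ = ∫ _, (0 : ℂ) ∂μ := integral_congr_ae this
      _ = 0 := integral_zero _ _
end

section
/- Let (Ω, μ) be a σ-finite measure space, H a separable Hilbert space decomposed as an orthogonal sum H = H₁ ⊕ ⋯ ⊕ H_κ, and M ⊆ L²(Ω, H) a closed subspace of the form M = {Φ : Φ(ω) ∈ J(ω) a.e.} for a measurable range function J. For each j define M_j = {ω ↦ P_{H_j}(Φ(ω)) : Φ ∈ M}. If M_j ⊆ M for all j, then each M_j is a closed subspace of L²(Ω, H) and M = M₁ ⊕ ⋯ ⊕ M_κ (orthogonal direct sum). -/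
open MeasureTheory
open scoped ComplexInnerProductSpace ENNReal

private lemma Lp_coeFn_sum {α E : Type*} [MeasurableSpace α] {μ : Measure α}
    [NormedAddCommGroup E] {p : ℝ≥0∞} {ι : Type*} (s : Finset ι) (f : ι → Lp E p μ) :
    ∀ᵐ ω ∂μ, ((∑ i ∈ s, f i : Lp E p μ) : α → E) ω = ∑ i ∈ s, f i ω := by
  classical
  induction s using Finset.induction with
  | empty => simp only [Finset.sum_empty]; exact Lp.coeFn_zero E p μ
  | @insert a s ha ih =>
    rw [Finset.sum_insert ha]
    filter_upwards [Lp.coeFn_add (f a) (∑ i ∈ s, f i), ih] with ω h1 h2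
    rw [h1, Finset.sum_insert ha]
    simp only [Pi.add_apply]
    rw [h2]

private lemma isClosed_ae_mem {Ω : Type*} [MeasurableSpace Ω] {μ : Measure Ω}
    {H : Type*} [NormedAddCommGroup H] (V : Ω → Set H) (hV : ∀ ω, IsClosed (V ω)) :
    IsClosed {f : Lp H 2 μ | ∀ᵐ ω ∂μ, f ω ∈ V ω} := by
  refine IsSeqClosed.isClosed ?_
  intro f g hf hfg
  have h2 : TendstoInMeasure μ (fun n => f n) Filter.atTop g :=
    tendstoInMeasure_of_tendsto_Lp hfg
  obtain ⟨ns, -, hns⟩ := h2.exists_seq_tendsto_ae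
  have hall : ∀ᵐ ω ∂μ, ∀ k : ℕ, (f (ns k)) ω ∈ V ω := by
    rw [MeasureTheory.ae_all_iff]
    exact fun k => hf (ns k)
  filter_upwards [hns, hall] with ω hω hωall
  exact (hV ω).mem_of_tendsto hω (Filter.Eventually.of_forall hωall)

/-- If `H = H₁ ⊕ ⋯ ⊕ H_κ` orthogonally and a multiplicatively invariant space
`M = {Φ : Φ(ω) ∈ J(ω) a.e.} ⊆ L²(Ω, H)` is decomposable, i.e. each space `M_j` of
pointwise `H_j`-projections of elements of `M` satisfies `M_j ⊆ M`, then each `M_j` is a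
closed subspace and `M = M₁ ⊕ ⋯ ⊕ M_κ` is an orthogonal direct sum. -/
theorem decomposable_MI_orthogonal_sum
    {Ω : Type*} [MeasurableSpace Ω] (μ : Measure Ω) [SigmaFinite μ]
    {H : Type*} [NormedAddCommGroup H] [InnerProductSpace ℂ H] [CompleteSpace H]
    [SecondCountableTopology H]
    (κ : ℕ) (Hsub : Fin κ → Submodule ℂ H) [instH : ∀ i, CompleteSpace (Hsub i)]
    (horthH : ∀ i j, i ≠ j → ∀ x ∈ Hsub i, ∀ y ∈ Hsub j, ⟪x, y⟫ = 0)
    (hspan : (⨆ i, Hsub i).topologicalClosure = ⊤)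
    (J : Ω → Submodule ℂ H) [instJ : ∀ ω, CompleteSpace (J ω)]
    (hJmeas : ∀ a b : H, Measurable fun ω => ⟪((J ω).orthogonalProjectionOnto a : H), b⟫)
    (M : Submodule ℂ (Lp H 2 μ))
    (hM : ∀ Φ : Lp H 2 μ, Φ ∈ M ↔ ∀ᵐ ω ∂μ, Φ ω ∈ J ω)
    (Mj : Fin κ → Submodule ℂ (Lp H 2 μ))
    (hMj : ∀ j (Ψ : Lp H 2 μ), Ψ ∈ Mj j ↔
      ∃ Φ ∈ M, ∀ᵐ ω ∂μ, Ψ ω = ((Hsub j).orthogonalProjectionOnto (Φ ω) : H))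
    (hdec : ∀ j, Mj j ≤ M) :
    (∀ j, IsClosed (Mj j : Set (Lp H 2 μ))) ∧
    M = ⨆ j, Mj j ∧
    (∀ i j, i ≠ j → ∀ Φ ∈ Mj i, ∀ Ψ ∈ Mj j, ⟪Φ, Ψ⟫ = 0) := by
  classical
  -- the orthogonal projections onto `Hsub j` as continuous linear maps `H →L[ℂ] H`
  set P : Fin κ → (H →L[ℂ] H) :=
    fun j => (Hsub j).subtypeL.comp ((Hsub j).orthogonalProjectionOnto) with hPdef
  have hPmem : ∀ j (x : H), P j x ∈ Hsub j := fun j x =>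
    ((Hsub j).orthogonalProjectionOnto x).2
  have hPcoe : ∀ j (x : H), P j x = ((Hsub j).orthogonalProjectionOnto x : H) := fun j x => rfl
  -- the sum of the projections is the identity
  have hsum : ∀ x : H, ∑ j, P j x = x := by
    intro x
    have hbot : (⨆ i, Hsub i)ᗮ = ⊥ := Submodule.topologicalClosure_eq_top_iff.mp hspan
    have hy : (x - ∑ j, P j x) ∈ (⨆ i, Hsub i)ᗮ := by
      rw [Submodule.mem_orthogonal]
      intro u hu
      refine Submodule.iSup_induction Hsub (motive := fun u => ⟪u, x - ∑ j, P j x⟫ = 0) hu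
        ?_ (by simp) ?_
      · intro k u hu
        have h1 : ⟪u, x - P k x⟫ = 0 :=
          (Submodule.mem_orthogonal _ _).mp
            ((Hsub k).sub_starProjection_mem_orthogonal x) u hu
        have hsum0 : ∑ j, ⟪u, P j x⟫ = ⟪u, x⟫ := by
          rw [Finset.sum_eq_single k]
          · rw [inner_sub_right, sub_eq_zero] at h1
            exact h1.symm
          · intro j _ hjk
            exact horthH k j (Ne.symm hjk) u hu (P j x) (hPmem j x)
          · simp
        rw [inner_sub_right, inner_sum, hsum0, sub_self]
      · intro a b ha hb
        rw [inner_add_left, ha, hb, add_zero]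
    rw [hbot, Submodule.mem_bot, sub_eq_zero] at hy
    exact hy.symm
  -- characterization of membership in `Mj j`
  have hMem : ∀ j (Ψ : Lp H 2 μ), Ψ ∈ Mj j ↔ Ψ ∈ M ∧ (P j).compLp Ψ = Ψ := by
    intro j Ψ
    constructor
    · intro hΨ
      refine ⟨hdec j hΨ, ?_⟩
      obtain ⟨Φ, hΦM, hae⟩ := (hMj j Ψ).mp hΨ
      refine Lp.ext ?_
      filter_upwards [hae, (P j).coeFn_compLp Ψ] with ω h1 h2
      rw [h2]
      have hmem : Ψ ω ∈ Hsub j := by rw [h1]; exact ((Hsub j).orthogonalProjectionOnto (Φ ω)).2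
      rw [hPcoe, ← Submodule.starProjection_apply, (Submodule.starProjection_eq_self_iff (K := Hsub j)).mpr hmem]
    · rintro ⟨hΨM, hfix⟩
      refine (hMj j Ψ).mpr ⟨Ψ, hΨM, ?_⟩
      have := (P j).coeFn_compLp Ψ
      rw [hfix] at this
      filter_upwards [this] with ω hω
      rw [← hPcoe j]
      exact hω
  -- members of `Mj j` take values in `Hsub j` a.e.
  have hvals : ∀ j (Ψ : Lp H 2 μ), Ψ ∈ Mj j → ∀ᵐ ω ∂μ, Ψ ω ∈ Hsub j := by
    intro j Ψ hΨ
    obtain ⟨Φ, -, hae⟩ := (hMj j Ψ).mp hΨ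
    filter_upwards [hae] with ω hω
    rw [hω]
    exact ((Hsub j).orthogonalProjectionOnto (Φ ω)).2
  -- `M` is closed
  have hMclosed : IsClosed (M : Set (Lp H 2 μ)) := by
    have hset : (M : Set (Lp H 2 μ)) = {f : Lp H 2 μ | ∀ᵐ ω ∂μ, f ω ∈ J ω} :=
      Set.ext fun f => hM f
    rw [hset]
    exact isClosed_ae_mem (fun ω => (J ω : Set H)) fun ω =>
      IsComplete.isClosed (completeSpace_coe_iff_isComplete.mp (instJ ω))
  refine ⟨?_, ?_, ?_⟩
  · -- each `Mj j` is closed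
    intro j
    have hset : (Mj j : Set (Lp H 2 μ)) =
        (M : Set (Lp H 2 μ)) ∩ {f : Lp H 2 μ | (P j).compLp f = f} :=
      Set.ext fun Ψ => (hMem j Ψ).trans Iff.rfl
    rw [hset]
    exact hMclosed.inter <| isClosed_eq (((P j).compLpL 2 μ).continuous) continuous_id
  · -- `M = ⨆ j, Mj j`
    refine le_antisymm ?_ (iSup_le hdec)
    intro Φ hΦ
    have hdecomp : Φ = ∑ j, (P j).compLp Φ := by
      refine (Lp.ext ?_)
      have hcoe : ∀ᵐ ω ∂μ, (∑ j, (P j).compLp Φ : Lp H 2 μ) ω = ∑ j, ((P j).compLp Φ) ω :=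
        Lp_coeFn_sum Finset.univ fun j => (P j).compLp Φ
      have hall : ∀ᵐ ω ∂μ, ∀ j, ((P j).compLp Φ) ω = P j (Φ ω) := by
        rw [MeasureTheory.ae_all_iff]
        exact fun j => (P j).coeFn_compLp Φ
      filter_upwards [hcoe, hall] with ω h1 h2
      rw [h1, Finset.sum_congr rfl fun j _ => h2 j, hsum]
    rw [hdecomp]
    refine Submodule.sum_mem _ fun j _ => ?_
    refine Submodule.mem_iSup_of_mem j ?_
    refine (hMj j _).mpr ⟨Φ, hΦ, ?_⟩
    filter_upwards [(P j).coeFn_compLp Φ] with ω hω using hω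
  · -- orthogonality
    intro i j hij Φ hΦ Ψ hΨ
    rw [MeasureTheory.L2.inner_def]
    rw [show (0 : ℂ) = ∫ ω, (0 : ℂ) ∂μ by simp]
    refine integral_congr_ae ?_
    filter_upwards [hvals i Φ hΦ, hvals j Ψ hΨ] with ω h1 h2
    exact horthH i j hij _ h1 _ h2
end

section
/- Let (Ω, μ) be a σ-finite measure space, H a separable Hilbert space with orthogonal decomposition H = H₁ ⊕ ⋯ ⊕ H_κ, and M ⊆ L²(Ω, H) a closed subspace determined by a measurable range function J via M = {Φ : Φ(ω) ∈ J(ω) a.e.}. Then the following are equivalent: (i) for every j, the space M_j of pointwise H_j-projections of elements of M is contained in M; (ii) for every j, P_{H_j}(J(ω)) ⊆ J(ω) for a.e. ω ∈ Ω. -/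
open MeasureTheory
open scoped ComplexInnerProductSpace ENNReal

/-- A function into a second-countable pseudometric space whose distances to every point are
measurable is itself (Borel-)measurable. -/
lemma measurable_of_dist_measurable' {Ω β : Type*} [MeasurableSpace Ω] [PseudoMetricSpace β]
    [TopologicalSpace.SeparableSpace β] [Nonempty β] [MeasurableSpace β] [BorelSpace β]
    {f : Ω → β} (h : ∀ b : β, Measurable fun ω => dist (f ω) b) : Measurable f := by
  apply measurable_of_isOpen
  intro U hU
  set d := TopologicalSpace.denseSeq β with hd
  have hdense : DenseRange d := TopologicalSpace.denseRange_denseSeq β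
  have hkey : f ⁻¹' U = ⋃ (p : ℕ × ℚ) (_ : Metric.ball (d p.1) (p.2 : ℝ) ⊆ U),
      f ⁻¹' Metric.ball (d p.1) (p.2 : ℝ) := by
    ext ω
    simp only [Set.mem_iUnion, Set.mem_preimage]
    constructor
    · intro hω
      obtain ⟨ε, εpos, hball⟩ := Metric.isOpen_iff.1 hU (f ω) hω
      obtain ⟨k, hk⟩ := hdense.exists_dist_lt (f ω) (by positivity : (0:ℝ) < ε / 4)
      obtain ⟨q, hq1, hq2⟩ := exists_rat_btwn (by linarith : ε / 4 < ε / 2)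
      refine ⟨(k, q), ?_, ?_⟩
      · intro y hy
        apply hball
        rw [Metric.mem_ball] at hy ⊢
        have : dist y (f ω) ≤ dist y (d k) + dist (d k) (f ω) := dist_triangle _ _ _
        rw [dist_comm (d k) (f ω)] at this
        linarith
      · rw [Metric.mem_ball]
        linarith
    · rintro ⟨p, hsub, hmem⟩
      exact hsub hmem
  rw [hkey]
  refine MeasurableSet.iUnion fun p => MeasurableSet.iUnion fun _ => ?_
  have : f ⁻¹' Metric.ball (d p.1) (p.2 : ℝ)
      = (fun ω => dist (f ω) (d p.1)) ⁻¹' Set.Iio (p.2 : ℝ) := by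
    ext ω; simp [Metric.mem_ball]
  rw [this]
  exact h (d p.1) measurableSet_Iio

/-- Characterization of decomposable MI spaces via range functions: for
`M = {Φ : Φ(ω) ∈ J(ω) a.e.} ⊆ L²(Ω, H)` and an orthogonal decomposition
`H = H₁ ⊕ ⋯ ⊕ H_κ`, the pointwise `H_j`-projections of elements of `M` belong to `M`
for every `j` iff `P_{H_j}(J(ω)) ⊆ J(ω)` for a.e. `ω`, for every `j`. -/
theorem decomposable_MI_iff_range_function
    {Ω : Type*} [MeasurableSpace Ω] (μ : Measure Ω) [SigmaFinite μ]
    {H : Type*} [NormedAddCommGroup H] [InnerProductSpace ℂ H] [CompleteSpace H]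
    [SecondCountableTopology H]
    (κ : ℕ) (Hsub : Fin κ → Submodule ℂ H) [instH : ∀ i, CompleteSpace (Hsub i)]
    (horthH : ∀ i j, i ≠ j → ∀ x ∈ Hsub i, ∀ y ∈ Hsub j, ⟪x, y⟫ = 0)
    (hspan : (⨆ i, Hsub i).topologicalClosure = ⊤)
    (J : Ω → Submodule ℂ H) [instJ : ∀ ω, CompleteSpace (J ω)]
    (hJmeas : ∀ a b : H, Measurable fun ω => ⟪(Submodule.orthogonalProjectionOnto (J ω) a : H), b⟫)
    (M : Submodule ℂ (Lp H 2 μ))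
    (hM : ∀ Φ : Lp H 2 μ, Φ ∈ M ↔ ∀ᵐ ω ∂μ, Φ ω ∈ J ω) :
    (∀ j, ∀ Φ ∈ M, ∀ Ψ : Lp H 2 μ,
        (∀ᵐ ω ∂μ, Ψ ω = (Submodule.orthogonalProjectionOnto (Hsub j) (Φ ω) : H)) → Ψ ∈ M)
      ↔ (∀ j, ∀ᵐ ω ∂μ,
          (J ω).map (((Hsub j).subtypeL.comp
            (Submodule.orthogonalProjectionOnto (Hsub j))).toLinearMap) ≤ J ω) := by
  constructor
  · -- forward direction
    intro h j
    classical
    haveI : Nonempty H := ⟨0⟩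
    letI : MeasurableSpace H := borel H
    haveI : BorelSpace H := ⟨rfl⟩
    set Pj : H →L[ℂ] H := (Hsub j).subtypeL.comp (Submodule.orthogonalProjectionOnto (Hsub j)) with hPj
    -- strong measurability of ω ↦ P_{J ω} a
    have hQmeas : ∀ a : H, Measurable fun ω => (Submodule.orthogonalProjectionOnto (J ω) a : H) := by
      intro a
      apply measurable_of_dist_measurable'
      intro b
      have hdist : ∀ ω, dist ((Submodule.orthogonalProjectionOnto (J ω) a : H)) b
          = Real.sqrt ((⟪(Submodule.orthogonalProjectionOnto (J ω) a : H), a⟫).re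
              - 2 * (⟪(Submodule.orthogonalProjectionOnto (J ω) a : H), b⟫).re + ‖b‖ ^ 2) := by
        intro ω
        set x : H := (Submodule.orthogonalProjectionOnto (J ω) a : H) with hx
        have h1 : ‖x - b‖ ^ 2 = ‖x‖ ^ 2 - 2 * (⟪x, b⟫).re + ‖b‖ ^ 2 := by
          simpa using norm_sub_sq (𝕜 := ℂ) x b
        have h0 : ⟪a - x, x⟫ = 0 :=
          (J ω).starProjection_inner_eq_zero a x (Submodule.coe_mem _)
        have h2 : ‖x‖ ^ 2 = (⟪x, a⟫).re := by
          rw [inner_sub_left, sub_eq_zero] at h0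
          have hax : (⟪a, x⟫).re = ‖x‖ ^ 2 := by
            rw [h0]
            simpa using inner_self_eq_norm_sq (𝕜 := ℂ) x
          have hsymm : (⟪x, a⟫).re = (⟪a, x⟫).re := by
            simpa using inner_re_symm (𝕜 := ℂ) x a
          rw [hsymm]
          exact hax.symm
        rw [dist_eq_norm, ← h2, ← h1]
        exact (Real.sqrt_sq (norm_nonneg _)).symm
      simp only [hdist]
      apply Measurable.sqrt
      have hm1 : Measurable fun ω => (⟪(Submodule.orthogonalProjectionOnto (J ω) a : H), a⟫).re :=
        Complex.measurable_re.comp (hJmeas a a)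
      have hm2 : Measurable fun ω => (⟪(Submodule.orthogonalProjectionOnto (J ω) a : H), b⟫).re :=
        Complex.measurable_re.comp (hJmeas a b)
      exact (hm1.sub (hm2.const_mul 2)).add_const _
    -- key step: on each spanning set, the projection of P_{J ω} a lies in J ω a.e.
    have key : ∀ (n : ℕ) (a : H), ∀ᵐ ω ∂μ, ω ∈ spanningSets μ n →
        Pj ((Submodule.orthogonalProjectionOnto (J ω) a : H)) ∈ J ω := by
      intro n a
      set S := spanningSets μ n with hS
      have hSmeas : MeasurableSet S := measurableSet_spanningSets μ n
      set f : Ω → H := S.indicator (fun ω => (Submodule.orthogonalProjectionOnto (J ω) a : H)) with hf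
      have hfmem : MemLp f 2 μ := by
        rw [hf, memLp_indicator_iff_restrict hSmeas]
        haveI : Fact (μ S < ⊤) := ⟨measure_spanningSets_lt_top μ n⟩
        refine MemLp.of_bound ((hQmeas a).stronglyMeasurable.aestronglyMeasurable) ‖a‖
          (Filter.Eventually.of_forall fun ω => ?_)
        calc ‖((Submodule.orthogonalProjectionOnto (J ω) a : H))‖ = ‖Submodule.orthogonalProjectionOnto (J ω) a‖ := rfl
          _ ≤ ‖Submodule.orthogonalProjectionOnto (J ω)‖ * ‖a‖ := (Submodule.orthogonalProjectionOnto (J ω)).le_opNorm a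
          _ ≤ 1 * ‖a‖ := by
              exact mul_le_mul_of_nonneg_right (J ω).orthogonalProjectionOnto_norm_le (norm_nonneg a)
          _ = ‖a‖ := one_mul _
      set Φ := hfmem.toLp f with hΦ
      have hΦM : Φ ∈ M := by
        rw [hM]
        filter_upwards [hfmem.coeFn_toLp] with ω hω
        rw [hω, hf]
        by_cases hωS : ω ∈ S
        · rw [Set.indicator_of_mem hωS]; exact Submodule.coe_mem _
        · rw [Set.indicator_of_notMem hωS]; exact (J ω).zero_mem
      have hgmem : MemLp (Pj ∘ f) 2 μ := Pj.comp_memLp' hfmem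
      set Ψ := hgmem.toLp _ with hΨ
      have hΨeq : ∀ᵐ ω ∂μ, Ψ ω = (Submodule.orthogonalProjectionOnto (Hsub j) (Φ ω) : H) := by
        filter_upwards [hgmem.coeFn_toLp, hfmem.coeFn_toLp] with ω h1 h2
        rw [h1, h2]; rfl
      have hΨM := h j Φ hΦM Ψ hΨeq
      filter_upwards [(hM Ψ).1 hΨM, hgmem.coeFn_toLp] with ω h1 h2 hωS
      rw [h2] at h1
      simpa [hf, Function.comp, Set.indicator_of_mem hωS] using h1
    -- combine over n and the dense sequence
    set d := TopologicalSpace.denseSeq H with hd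
    have hdense : DenseRange d := TopologicalSpace.denseRange_denseSeq H
    have key2 : ∀ᵐ ω ∂μ, ∀ n k, ω ∈ spanningSets μ n →
        Pj ((Submodule.orthogonalProjectionOnto (J ω) (d k) : H)) ∈ J ω :=
      ae_all_iff.2 fun n => ae_all_iff.2 fun k => key n (d k)
    filter_upwards [key2] with ω hω
    rw [Submodule.map_le_iff_le_comap]
    intro x hx
    rw [Submodule.mem_comap]
    have hclosed : IsClosed ((J ω) : Set H) :=
      (completeSpace_coe_iff_isComplete.1 (instJ ω)).isClosed
    have hall : ∀ k, Pj ((Submodule.orthogonalProjectionOnto (J ω) (d k) : H)) ∈ J ω := by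
      intro k
      obtain ⟨n, hn⟩ : ∃ n, ω ∈ spanningSets μ n := by
        have : ω ∈ ⋃ n, spanningSets μ n := by
          rw [iUnion_spanningSets]; trivial
        exact Set.mem_iUnion.1 this
      exact hω n k hn
    have hCclosed : IsClosed {y : H | Pj ((Submodule.orthogonalProjectionOnto (J ω) y : H)) ∈ J ω} := by
      have hcont : Continuous fun y : H => Pj ((Submodule.orthogonalProjectionOnto (J ω) y : H)) :=
        Pj.continuous.comp (continuous_subtype_val.comp (Submodule.orthogonalProjectionOnto (J ω)).continuous)
      exact hclosed.preimage hcont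
    have huniv : Pj ((Submodule.orthogonalProjectionOnto (J ω) x : H)) ∈ J ω := by
      have hsub : Set.range d ⊆ {y : H | Pj ((Submodule.orthogonalProjectionOnto (J ω) y : H)) ∈ J ω} :=
        Set.range_subset_iff.2 hall
      have hcl : closure (Set.range d)
          ⊆ {y : H | Pj ((Submodule.orthogonalProjectionOnto (J ω) y : H)) ∈ J ω} :=
        hCclosed.closure_subset_iff.2 hsub
      exact hcl (by rw [hdense.closure_range]; trivial)
    rwa [show ((J ω).orthogonalProjectionOnto x : H) = x from (J ω).starProjection_eq_self_iff.2 hx] at huniv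
  · -- backward direction
    intro h j Φ hΦ Ψ hΨ
    rw [hM]
    filter_upwards [h j, (hM Φ).1 hΦ, hΨ] with ω h1 h2 h3
    rw [h3]
    exact h1 (Submodule.mem_map_of_mem h2)
end

section
/- Let (Ω, μ) be a σ-finite measure space, H a separable Hilbert space, D ⊆ L^∞(Ω) a determining set for L¹(Ω), and A ⊆ L²(Ω, H) at most countable. Let M_D(A) be the closed linear span of {gΦ : g ∈ D, Φ ∈ A}. Suppose H = H₁ ⊕ ⋯ ⊕ H_κ orthogonally, M := M_D(A) satisfies M_j ⊆ M for all j (where M_j is the set of pointwise H_j-projections of elements of M). Then M_j = M_D(P_j(A)), where P_j(A) = {ω ↦ P_{H_j}(Φ(ω)) : Φ ∈ A}. -/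
open MeasureTheory
open scoped ComplexInnerProductSpace ENNReal

/-- The MI space `M_D(B)` generated by a set `B ⊆ L²(Ω, H)` with respect to a set
`D ⊆ L^∞(Ω)` of multipliers: the closed linear span of `{gΦ : g ∈ D, Φ ∈ B}`. -/
noncomputable def MDspan {Ω : Type*} [MeasurableSpace Ω] (μ : MeasureTheory.Measure Ω)
    {H : Type*} [NormedAddCommGroup H] [InnerProductSpace ℂ H]
    (D : Set (Ω → ℂ)) (B : Set (Lp H 2 μ)) : Submodule ℂ (Lp H 2 μ) :=
  (Submodule.span ℂ
    {Ψ : Lp H 2 μ | ∃ g ∈ D, ∃ Φ ∈ B, ∀ᵐ ω ∂μ, Ψ ω = g ω • Φ ω}).topologicalClosure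

/-- If `M = M_D(A)` is decomposable with respect to an orthogonal decomposition
`H = H₁ ⊕ ⋯ ⊕ H_κ` (i.e. pointwise `H_j`-projections of elements of `M` remain in `M`),
then `M_j = M_D(P_j(A))`, where `P_j(A)` is the set of pointwise `H_j`-projections of the
generators. -/
theorem decomposable_MI_generators
    {Ω : Type*} [MeasurableSpace Ω] (μ : Measure Ω) [SigmaFinite μ]
    {H : Type*} [NormedAddCommGroup H] [InnerProductSpace ℂ H] [CompleteSpace H]
    [SecondCountableTopology H]
    (κ : ℕ) (Hsub : Fin κ → Submodule ℂ H) [instH : ∀ i, CompleteSpace (Hsub i)]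
    (horthH : ∀ i j, i ≠ j → ∀ x ∈ Hsub i, ∀ y ∈ Hsub j, ⟪x, y⟫ = 0)
    (hspan : (⨆ i, Hsub i).topologicalClosure = ⊤)
    (D : Set (Ω → ℂ)) (hD_mem : ∀ g ∈ D, MemLp g ∞ μ)
    (hD_det : ∀ f : Ω → ℂ, Integrable f μ →
      (∀ g ∈ D, ∫ ω, f ω * g ω ∂μ = 0) → f =ᵐ[μ] 0)
    (A : Set (Lp H 2 μ)) (hA : A.Countable)
    (M : Submodule ℂ (Lp H 2 μ)) (hMA : M = MDspan μ D A)
    (hdec : ∀ (j : Fin κ), ∀ Φ ∈ M, ∀ Ψ : Lp H 2 μ,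
      (∀ᵐ ω ∂μ, Ψ ω = ((Hsub j).orthogonalProjectionOnto (Φ ω) : H)) → Ψ ∈ M) :
    ∀ (j : Fin κ) (Ψ : Lp H 2 μ),
      (∃ Φ ∈ M, ∀ᵐ ω ∂μ, Ψ ω = ((Hsub j).orthogonalProjectionOnto (Φ ω) : H))
        ↔ Ψ ∈ MDspan μ D
            {Ψ' : Lp H 2 μ | ∃ Φ ∈ A,
              ∀ᵐ ω ∂μ, Ψ' ω = ((Hsub j).orthogonalProjectionOnto (Φ ω) : H)} := by
  intro j Ψ
  haveI := instH j
  set P : H →L[ℂ] H := (Hsub j).subtypeL.comp (Hsub j).orthogonalProjectionOnto with hPdef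
  have hPapply : ∀ x : H, P x = ((Hsub j).orthogonalProjectionOnto x : H) := fun x => rfl
  have hPP : ∀ x : H, P (P x) = P x := by
    intro x
    simp only [hPapply]
    congr 1
    exact Submodule.orthogonalProjectionOnto_mem_subspace_eq_self ((Hsub j).orthogonalProjectionOnto x)
  set T : Lp H 2 μ →L[ℂ] Lp H 2 μ := P.compLpL 2 μ with hTdef
  have hTcoe : ∀ Φ : Lp H 2 μ, (T Φ : Ω → H) =ᵐ[μ] fun ω => P (Φ ω) :=
    fun Φ => ContinuousLinearMap.coeFn_compLpL P Φ
  -- the generator sets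
  set S : Set (Lp H 2 μ) :=
    {Ψ : Lp H 2 μ | ∃ g ∈ D, ∃ Φ ∈ A, ∀ᵐ ω ∂μ, Ψ ω = g ω • Φ ω} with hSdef
  set B' : Set (Lp H 2 μ) :=
    {Ψ' : Lp H 2 μ | ∃ Φ ∈ A, ∀ᵐ ω ∂μ, Ψ' ω = ((Hsub j).orthogonalProjectionOnto (Φ ω) : H)}
    with hB'def
  set S' : Set (Lp H 2 μ) :=
    {Ψ : Lp H 2 μ | ∃ g ∈ D, ∃ Φ ∈ B', ∀ᵐ ω ∂μ, Ψ ω = g ω • Φ ω} with hS'def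
  have hae_iff : ∀ Φ Ψ' : Lp H 2 μ,
      (∀ᵐ ω ∂μ, Ψ' ω = ((Hsub j).orthogonalProjectionOnto (Φ ω) : H)) ↔ Ψ' = T Φ := by
    intro Φ Ψ'
    constructor
    · intro h
      refine Lp.ext ?_
      filter_upwards [h, hTcoe Φ] with ω h1 h2
      rw [h1, h2, hPapply]
    · rintro rfl
      filter_upwards [hTcoe Φ] with ω hω
      rw [hω, hPapply]
  -- T maps generators of M to generators of M_D(B')
  have hTS : ∀ s ∈ S, T s ∈ S' := by
    rintro s ⟨g, hg, Φ', hΦ', hs⟩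
    refine ⟨g, hg, T Φ', ⟨Φ', hΦ', ?_⟩, ?_⟩
    · filter_upwards [hTcoe Φ'] with ω hω
      rw [hω, hPapply]
    · filter_upwards [hTcoe s, hTcoe Φ', hs] with ω h1 h2 h3
      rw [h1, h3, P.map_smul, h2]
  -- the fixed point property : T s = s for generators of M_D(B')
  have hfix : ∀ s ∈ S', T s = s := by
    rintro s ⟨g, hg, Φ'', ⟨Φ', hΦ', hΦ''⟩, hs⟩
    refine Lp.ext ?_
    filter_upwards [hTcoe s, hs, hΦ''] with ω h1 h2 h3
    rw [h1, h2, h3, P.map_smul, ← hPapply, hPP, hPapply]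
  -- every generator of M_D(B') lies in M
  have hS'M : ∀ s ∈ S', s ∈ M := by
    rintro s ⟨g, hg, Φ'', ⟨Φ', hΦ', hΦ''⟩, hs⟩
    -- Θ := gΦ' is an element of Lp equal a.e. to g • Φ'
    have hmem : MemLp (g • (Φ' : Ω → H)) 2 μ :=
      MemLp.smul (Lp.memLp Φ') (hD_mem g hg)
    set Θ : Lp H 2 μ := hmem.toLp _ with hΘdef
    have hΘcoe : (Θ : Ω → H) =ᵐ[μ] g • (Φ' : Ω → H) := MemLp.coeFn_toLp hmem
    have hΘM : Θ ∈ M := by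
      rw [hMA]
      refine Submodule.le_topologicalClosure _ (Submodule.subset_span ?_)
      exact ⟨g, hg, Φ', hΦ', hΘcoe⟩
    refine hdec j Θ hΘM s ?_
    filter_upwards [hs, hΦ'', hΘcoe] with ω h1 h2 h3
    rw [h1, h2, ← hPapply, ← P.map_smul]
    rw [show g • (Φ' : Ω → H) = fun ω => g ω • Φ' ω from rfl] at h3
    rw [h3, hPapply]
  -- M_D(B') ⊆ M
  have hMclosed : IsClosed (M : Set (Lp H 2 μ)) := by
    rw [hMA]; exact Submodule.isClosed_topologicalClosure _
  have hMB'M : MDspan μ D B' ≤ M :=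
    Submodule.topologicalClosure_minimal _ (Submodule.span_le.mpr hS'M) hMclosed
  constructor
  · rintro ⟨Φ, hΦM, hae⟩
    have hΨ : Ψ = T Φ := (hae_iff Φ Ψ).mp hae
    have hΦ' : Φ ∈ closure (Submodule.span ℂ S : Set (Lp H 2 μ)) := by
      rw [hMA] at hΦM; exact hΦM
    have hmaps : Set.MapsTo T (Submodule.span ℂ S : Set (Lp H 2 μ))
        (MDspan μ D B' : Set (Lp H 2 μ)) := by
      intro x hx
      have : Submodule.span ℂ S ≤ Submodule.comap (T : Lp H 2 μ →ₗ[ℂ] Lp H 2 μ)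
          (MDspan μ D B') := by
        refine Submodule.span_le.mpr ?_
        intro s hs
        exact Submodule.le_topologicalClosure _ (Submodule.subset_span (hTS s hs))
      exact this hx
    have : T Φ ∈ closure (MDspan μ D B' : Set (Lp H 2 μ)) :=
      map_mem_closure T.continuous hΦ' hmaps
    rw [hΨ]
    have hcl : IsClosed (MDspan μ D B' : Set (Lp H 2 μ)) :=
      Submodule.isClosed_topologicalClosure _
    exact hcl.closure_subset this
  · intro hΨ
    -- T Ψ = Ψ
    have hker : Submodule.span ℂ S' ≤ ((T - ContinuousLinearMap.id ℂ _) :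
        Lp H 2 μ →L[ℂ] Lp H 2 μ).ker := by
      refine Submodule.span_le.mpr ?_
      intro s hs
      simp only [SetLike.mem_coe, LinearMap.mem_ker, ContinuousLinearMap.coe_coe, ContinuousLinearMap.coe_sub',
        Pi.sub_apply, ContinuousLinearMap.coe_id', id_eq]
      rw [hfix s hs, sub_self]
    have hfixΨ : T Ψ = Ψ := by
      have hclosed : IsClosed (((T - ContinuousLinearMap.id ℂ _) :
          Lp H 2 μ →L[ℂ] Lp H 2 μ).ker : Set (Lp H 2 μ)) :=
        ContinuousLinearMap.isClosed_ker _
      have := Submodule.topologicalClosure_minimal _ hker hclosed hΨ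
      have h2 : ((T - ContinuousLinearMap.id ℂ (Lp H 2 μ)) :
          Lp H 2 μ →L[ℂ] Lp H 2 μ) Ψ = 0 := this
      simpa [sub_eq_zero] using h2
    exact ⟨Ψ, hMB'M hΨ, (hae_iff Ψ Ψ).mpr hfixΨ.symm⟩
end

section
/- Let G be a second countable locally compact abelian group and V ⊆ L²(G) a closed subspace. Then V is invariant under all translations (T_x f ∈ V for every f ∈ V and x ∈ G, where T_x f(y) = f(y − x)) if and only if there exists a measurable set E ⊆ Ĝ such that V = {f ∈ L²(G) : f̂ = 0 a.e. on E}. -/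
open MeasureTheory
open scoped ENNReal

set_option maxHeartbeats 1000000 in
set_option synthInstance.maxHeartbeats 100000 in
/-- Wiener's theorem for `L²` of a second countable LCA group `G`: a closed subspace
`V ⊆ L²(G)` is invariant under all translations iff there is a measurable set `E` in the
dual such that `V = {f : 𝓕 f = 0 a.e. on E}`.  The dual group is modelled abstractly by a
measure space `Gh` with the characters `e x`, and the Fourier–Plancherel transform by a
linear isometric isomorphism `𝓕 : L²(G) ≃ L²(Gh)` intertwining translation with
multiplication by characters. -/
theorem wiener_translation_invariant_iff
    {G : Type*} [AddCommGroup G] [TopologicalSpace G] [IsTopologicalAddGroup G]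
    [LocallyCompactSpace G] [SecondCountableTopology G]
    [MeasurableSpace G] [BorelSpace G]
    (μ : Measure G) [μ.IsAddHaarMeasure]
    {Gh : Type*} [MeasurableSpace Gh] (ν : Measure Gh) [SigmaFinite ν]
    (T : G → (Lp ℂ 2 μ ≃ₗᵢ[ℂ] Lp ℂ 2 μ))
    (hT : ∀ (x : G) (f : Lp ℂ 2 μ), ∀ᵐ y ∂μ, (T x f) y = f (y - x))
    (e : G → Gh → ℂ) (he_meas : ∀ x, Measurable (e x))
    (he_norm : ∀ x γ, ‖e x γ‖ = 1)
    (he_hom : ∀ x y γ, e (x + y) γ = e x γ * e y γ)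
    (hdet : ∀ F : Gh → ℂ, Integrable F ν →
      (∀ x : G, ∫ γ, F γ * e x γ ∂ν = 0) → F =ᵐ[ν] 0)
    (𝓕 : Lp ℂ 2 μ ≃ₗᵢ[ℂ] Lp ℂ 2 ν)
    (h𝓕 : ∀ (x : G) (f : Lp ℂ 2 μ),
      ∀ᵐ γ ∂ν, (𝓕 (T x f)) γ = e (-x) γ * (𝓕 f) γ)
    (V : Submodule ℂ (Lp ℂ 2 μ)) (hV : IsClosed (V : Set (Lp ℂ 2 μ))) :
    (∀ (x : G), ∀ f ∈ V, T x f ∈ V)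
      ↔ ∃ E : Set Gh, MeasurableSet E ∧
          ∀ f : Lp ℂ 2 μ, f ∈ V ↔ ∀ᵐ γ ∂ν, γ ∈ E → (𝓕 f) γ = 0 := by
  classical
  haveI : Fact ((1:ℝ≥0∞) ≤ 2) := ⟨one_le_two⟩
  haveI : Fact ((2:ℝ≥0∞) ≠ ∞) := ⟨by norm_num⟩
  constructor
  · intro hinv
    set W : Submodule ℂ (Lp ℂ 2 ν) :=
      V.map (𝓕.toLinearEquiv : Lp ℂ 2 μ →ₗ[ℂ] Lp ℂ 2 ν) with hWdef
    have hWmem : ∀ F : Lp ℂ 2 ν, F ∈ W ↔ ∃ f ∈ V, 𝓕 f = F := by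
      intro F
      rw [hWdef, Submodule.mem_map]
      constructor
      · rintro ⟨g, hg, hgeq⟩; exact ⟨g, hg, hgeq⟩
      · rintro ⟨g, hg, hgeq⟩; exact ⟨g, hg, hgeq⟩
    have hWclosed : IsClosed (W : Set (Lp ℂ 2 ν)) := by
      have himg : (W : Set (Lp ℂ 2 ν)) = ⇑𝓕 '' (V : Set (Lp ℂ 2 μ)) := by
        ext F
        constructor
        · intro hF
          obtain ⟨g, hg, hgeq⟩ := (hWmem F).mp hF
          exact ⟨g, hg, hgeq⟩
        · rintro ⟨g, hg, hgeq⟩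
          exact (hWmem F).mpr ⟨g, hg, hgeq⟩
      rw [himg]
      exact 𝓕.toHomeomorph.isClosedMap _ hV
    haveI : CompleteSpace W := hWclosed.completeSpace_coe
    -- Key orthogonality: products of elements of `W` and `Wᗮ` vanish a.e.
    have key : ∀ F ∈ W, ∀ K ∈ Wᗮ,
        (fun γ => (starRingEnd ℂ) (K γ) * F γ) =ᵐ[ν] 0 := by
      intro F hF K hK
      obtain ⟨f, hfV, rfl⟩ := (hWmem F).mp hF
      have hint : Integrable (fun γ => (starRingEnd ℂ) (K γ) * (𝓕 f) γ) ν := by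
        have h := MeasureTheory.L2.integrable_inner (𝕜 := ℂ) K (𝓕 f)
        simpa [RCLike.inner_apply, mul_comm] using h
      refine hdet _ hint ?_
      intro x
      have hmem : 𝓕 (T (-x) f) ∈ W := (hWmem _).mpr ⟨T (-x) f, hinv _ _ hfV, rfl⟩
      have hzero : (inner ℂ K (𝓕 (T (-x) f)) : ℂ) = 0 :=
        Submodule.inner_left_of_mem_orthogonal hmem hK
      have hinner : (inner ℂ K (𝓕 (T (-x) f)) : ℂ)
          = ∫ γ, (starRingEnd ℂ) (K γ) * (𝓕 (T (-x) f)) γ ∂ν := by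
        rw [MeasureTheory.L2.inner_def]
        exact integral_congr_ae (Filter.Eventually.of_forall fun γ => by
          simp [RCLike.inner_apply, mul_comm])
      have hcong : ∫ γ, (starRingEnd ℂ) (K γ) * (𝓕 (T (-x) f)) γ ∂ν
          = ∫ γ, ((starRingEnd ℂ) (K γ) * (𝓕 f) γ) * e x γ ∂ν := by
        refine integral_congr_ae ?_
        filter_upwards [h𝓕 (-x) f] with γ hγ
        rw [hγ, neg_neg]; ring
      calc ∫ γ, ((starRingEnd ℂ) (K γ) * (𝓕 f) γ) * e x γ ∂ν
          = ∫ γ, (starRingEnd ℂ) (K γ) * (𝓕 (T (-x) f)) γ ∂ν := hcong.symm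
        _ = (inner ℂ K (𝓕 (T (-x) f)) : ℂ) := hinner.symm
        _ = 0 := hzero
    -- Separability of `L²(ν)` and a countable dense family in `Wᗮ`
    haveI : SecondCountableTopology (Lp ℂ 2 ν) :=
      𝓕.toHomeomorph.symm.isEmbedding.secondCountableTopology
    haveI : Nonempty (↥Wᗮ) := ⟨0⟩
    obtain ⟨D, hDcount, hDdense⟩ := TopologicalSpace.exists_countable_dense (↥Wᗮ)
    have hDne : D.Nonempty := hDdense.nonempty
    obtain ⟨h, hrange⟩ := hDcount.exists_eq_range hDne
    set H : ℕ → Lp ℂ 2 ν := fun n => (h n : Lp ℂ 2 ν) with hHdef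
    have hHmem : ∀ n, H n ∈ Wᗮ := fun n => (h n).2
    set g : ℕ → Gh → ℂ := fun n => (Lp.aestronglyMeasurable (H n)).mk _ with hgdef
    have hgmeas : ∀ n, Measurable (g n) :=
      fun n => (Lp.aestronglyMeasurable (H n)).stronglyMeasurable_mk.measurable
    have hgae : ∀ n, (H n : Gh → ℂ) =ᵐ[ν] g n :=
      fun n => (Lp.aestronglyMeasurable (H n)).ae_eq_mk
    set E : Set Gh := ⋃ n, {γ | g n γ ≠ 0} with hEdef
    have hEmeas : MeasurableSet E := by
      refine MeasurableSet.iUnion fun n => ?_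
      have : {γ | g n γ ≠ 0} = (g n ⁻¹' {0})ᶜ := by
        ext γ; simp
      rw [this]
      exact ((hgmeas n) (measurableSet_singleton 0)).compl
    -- Lemma B: elements of `W` vanish a.e. on `E`
    have lemB : ∀ F ∈ W, ∀ᵐ γ ∂ν, γ ∈ E → (F : Gh → ℂ) γ = 0 := by
      intro F hF
      have h2 : ∀ᵐ γ ∂ν, ∀ n, (starRingEnd ℂ) (g n γ) * F γ = 0 := by
        rw [ae_all_iff]
        intro n
        filter_upwards [key F hF (H n) (hHmem n), hgae n] with γ h1 h2
        rw [← h2]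
        exact h1
      filter_upwards [h2] with γ hγ hγE
      obtain ⟨n, hn⟩ := Set.mem_iUnion.mp hγE
      have hne : (starRingEnd ℂ) (g n γ) ≠ 0 := by
        simpa using hn
      exact (mul_eq_zero.mp (hγ n)).resolve_left hne
    -- Lemma C: elements of `Wᗮ` vanish a.e. off `E`
    have lemC : ∀ K ∈ Wᗮ, ∀ᵐ γ ∂ν, γ ∉ E → (K : Gh → ℂ) γ = 0 := by
      intro K hK
      have hnil : ∀ n, (Eᶜ).indicator (H n : Gh → ℂ) =ᵐ[ν] 0 := by
        intro n
        filter_upwards [hgae n] with γ hγ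
        by_cases hmem : γ ∈ Eᶜ
        · rw [Set.indicator_of_mem hmem, hγ]
          have : γ ∉ {γ | g n γ ≠ 0} := fun hc => hmem (Set.mem_iUnion.mpr ⟨n, hc⟩)
          simpa using not_not.mp this
        · rw [Set.indicator_of_notMem hmem]; rfl
      have hzero : eLpNorm ((Eᶜ).indicator (K : Gh → ℂ)) 2 ν = 0 := by
        refine le_antisymm ?_ zero_le
        refine ENNReal.le_of_forall_pos_le_add fun ε hε _ => ?_
        rw [zero_add]
        -- choose `n` with `dist K (H n) < ε`
        obtain ⟨y, hyD, hy⟩ := hDdense.exists_dist_lt (⟨K, hK⟩ : ↥Wᗮ)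
          (by exact_mod_cast hε : (0:ℝ) < ε)
        rw [hrange] at hyD
        obtain ⟨n, rfl⟩ := hyD
        have hdist : dist K (H n) < (ε : ℝ) := by
          simpa [Subtype.dist_eq, hHdef] using hy
        have hsplit : (Eᶜ).indicator (K : Gh → ℂ) =ᵐ[ν]
            (Eᶜ).indicator ((K - H n : Lp ℂ 2 ν) : Gh → ℂ) + (Eᶜ).indicator (H n : Gh → ℂ) := by
          filter_upwards [Lp.coeFn_sub K (H n)] with γ hγ
          by_cases hmem : γ ∈ Eᶜ
          · simp only [Pi.add_apply, Set.indicator_of_mem hmem, hγ, Pi.sub_apply]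
            ring
          · simp only [Pi.add_apply, Set.indicator_of_notMem hmem, add_zero]
        rw [eLpNorm_congr_ae hsplit]
        have hb : eLpNorm ((Eᶜ).indicator ((K - H n : Lp ℂ 2 ν) : Gh → ℂ)
              + (Eᶜ).indicator (H n : Gh → ℂ)) 2 ν
            ≤ eLpNorm ((Eᶜ).indicator ((K - H n : Lp ℂ 2 ν) : Gh → ℂ)) 2 ν
              + eLpNorm ((Eᶜ).indicator (H n : Gh → ℂ)) 2 ν :=
          eLpNorm_add_le
            ((Lp.aestronglyMeasurable _).indicator hEmeas.compl)
            ((Lp.aestronglyMeasurable _).indicator hEmeas.compl) one_le_two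
        refine hb.trans ?_
        rw [eLpNorm_congr_ae (hnil n), eLpNorm_zero, add_zero]
        refine (eLpNorm_indicator_le _).trans ?_
        have : eLpNorm ((K - H n : Lp ℂ 2 ν) : Gh → ℂ) 2 ν
            = ENNReal.ofReal ‖K - H n‖ := by
          rw [Lp.norm_def, ENNReal.ofReal_toReal (Lp.eLpNorm_ne_top _)]
        rw [this]
        rw [← dist_eq_norm]
        exact (ENNReal.ofReal_le_ofReal hdist.le).trans
          (by simp [ENNReal.ofReal_coe_nnreal])
      have hind : (Eᶜ).indicator (K : Gh → ℂ) =ᵐ[ν] 0 :=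
        (eLpNorm_eq_zero_iff ((Lp.aestronglyMeasurable K).indicator hEmeas.compl)
          (by norm_num)).mp hzero
      filter_upwards [hind] with γ hγ hγE
      rw [← Set.indicator_of_mem (Set.mem_compl hγE) (K : Gh → ℂ)]
      exact hγ
    -- Conclusion
    refine ⟨E, hEmeas, fun f => ⟨fun hf => lemB (𝓕 f) ((hWmem _).mpr ⟨f, hf, rfl⟩), ?_⟩⟩
    intro hf
    set F₀ : Lp ℂ 2 ν := (W.orthogonalProjection (𝓕 f) : Lp ℂ 2 ν) with hF₀def
    have hF₀W : F₀ ∈ W := SetLike.coe_mem _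
    have hdiff : 𝓕 f - F₀ ∈ Wᗮ := W.sub_starProjection_mem_orthogonal (𝓕 f)
    have h1 := lemB F₀ hF₀W
    have h2 := lemC _ hdiff
    have h3 : ((𝓕 f - F₀ : Lp ℂ 2 ν) : Gh → ℂ) =ᵐ[ν] 0 := by
      filter_upwards [h1, h2, hf, Lp.coeFn_sub (𝓕 f) F₀] with γ ha hb hc hd
      by_cases hm : γ ∈ E
      · rw [hd, Pi.sub_apply, ha hm, hc hm, sub_zero]; rfl
      · exact hb hm
    have h4 : 𝓕 f - F₀ = 0 := Lp.eq_zero_iff_ae_eq_zero.mpr h3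
    have hFW : 𝓕 f ∈ W := by
      rw [sub_eq_zero] at h4
      rw [h4]; exact hF₀W
    obtain ⟨f₀, hf₀, hEq⟩ := (hWmem _).mp hFW
    rwa [← 𝓕.injective hEq]
  · rintro ⟨E, hE, hchar⟩ x f hf
    rw [hchar]
    filter_upwards [(hchar f).mp hf, h𝓕 x f] with γ ha hb hmem
    rw [hb, ha hmem, mul_zero]
end

section
/- Let G be a second countable LCA group. Suppose P : L²(Ĝ) → L²(Ĝ) is an orthogonal projection whose range is invariant under multiplication by all characters e_x (x ∈ G), where e_x(γ) = (x, γ). Then f · conj(Pg) = Pf · conj(g) almost everywhere for all f, g ∈ L²(Ĝ), and consequently P is given by multiplication by the indicator function of a measurable set: there is a measurable E ⊆ Ĝ with Pf = χ_{E^c} f for all f ∈ L²(Ĝ). -/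
open MeasureTheory
open scoped ComplexInnerProductSpace ENNReal

/-- Key step of Wiener's theorem: if `P` is an orthogonal projection on `L²(Ĝ)` whose
range is invariant under multiplication by all characters `e_x` (`x ∈ G`), then
`f ⋅ conj(Pg) = Pf ⋅ conj(g)` a.e. for all `f, g ∈ L²(Ĝ)` and `P` is multiplication by
the indicator function of the complement of a measurable set `E`. -/
theorem projection_commutes_with_characters
    (G : Type*) [AddCommGroup G]
    {Gh : Type*} [MeasurableSpace Gh] (ν : Measure Gh) [SigmaFinite ν]
    (e : G → Gh → ℂ) (he_meas : ∀ x, Measurable (e x))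
    (he_norm : ∀ x γ, ‖e x γ‖ = 1)
    (he_hom : ∀ x y γ, e (x + y) γ = e x γ * e y γ)
    (hdet : ∀ F : Gh → ℂ, Integrable F ν →
      (∀ x : G, ∫ γ, F γ * e x γ ∂ν = 0) → F =ᵐ[ν] 0)
    (P : Lp ℂ 2 ν →L[ℂ] Lp ℂ 2 ν)
    (hidem : ∀ f, P (P f) = P f)
    (hsa : ∀ f g : Lp ℂ 2 ν, ⟪P f, g⟫ = ⟪f, P g⟫)
    (hinv : ∀ (x : G) (f : Lp ℂ 2 ν), ∀ Ψ : Lp ℂ 2 ν,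
      (∀ᵐ γ ∂ν, Ψ γ = e x γ * (P f) γ) → P Ψ = Ψ) :
    (∀ f g : Lp ℂ 2 ν,
      (fun γ => f γ * (starRingEnd ℂ) ((P g) γ))
        =ᵐ[ν] fun γ => (P f) γ * (starRingEnd ℂ) (g γ)) ∧
    ∃ E : Set Gh, MeasurableSet E ∧
      ∀ f : Lp ℂ 2 ν, ∀ᵐ γ ∂ν, (P f) γ = Set.indicator Eᶜ (⇑f) γ := by
  classical
  -- basic facts about the characters
  have he0 : ∀ γ, e 0 γ = 1 := by
    intro γ
    have h := he_hom 0 0 γ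
    rw [add_zero] at h
    have hne : e 0 γ ≠ 0 := by
      intro h0
      have := he_norm 0 γ
      rw [h0, norm_zero] at this
      norm_num at this
    have : e 0 γ * 1 = e 0 γ * e 0 γ := by rw [mul_one]; exact h
    exact (mul_left_cancel₀ hne this).symm
  have hconj : ∀ (x : G) (γ : Gh), (starRingEnd ℂ) (e x γ) = e (-x) γ := by
    intro x γ
    have h1 : e x γ * e (-x) γ = 1 := by
      rw [← he_hom, add_neg_cancel, he0]
    have h2 : (starRingEnd ℂ) (e x γ) * e x γ = 1 := by
      rw [mul_comm, Complex.mul_conj]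
      norm_cast
      rw [← Complex.sq_norm]
      have := he_norm x γ
      rw [this]; norm_num
    calc (starRingEnd ℂ) (e x γ) = (starRingEnd ℂ) (e x γ) * (e x γ * e (-x) γ) := by
          rw [h1, mul_one]
      _ = ((starRingEnd ℂ) (e x γ) * e x γ) * e (-x) γ := by ring
      _ = e (-x) γ := by rw [h2, one_mul]
  -- multiplication by a character preserves L²
  have memMul : ∀ (x : G) (h : Lp ℂ 2 ν), MemLp (fun γ => e x γ * h γ) 2 ν := by
    intro x h
    refine MemLp.of_le (Lp.memLp h)
      ((he_meas x).aestronglyMeasurable.mul (Lp.aestronglyMeasurable h)) ?_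
    filter_upwards with γ
    rw [norm_mul, he_norm, one_mul]
  set mulLp : G → Lp ℂ 2 ν → Lp ℂ 2 ν := fun x h => (memMul x h).toLp _ with hmulLp
  have hmul_coe : ∀ (x : G) (h : Lp ℂ 2 ν),
      (mulLp x h : Gh → ℂ) =ᵐ[ν] fun γ => e x γ * h γ := fun x h => MemLp.coeFn_toLp _
  -- range invariance
  have hPmul : ∀ (x : G) (f : Lp ℂ 2 ν), P (mulLp x (P f)) = mulLp x (P f) :=
    fun x f => hinv x f _ (hmul_coe x (P f))
  -- Part 1
  have part1 : ∀ f g : Lp ℂ 2 ν,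
      (fun γ => f γ * (starRingEnd ℂ) ((P g) γ))
        =ᵐ[ν] fun γ => (P f) γ * (starRingEnd ℂ) (g γ) := by
    intro f g
    set F : Gh → ℂ :=
      fun γ => f γ * (starRingEnd ℂ) ((P g) γ) - (P f) γ * (starRingEnd ℂ) (g γ) with hF
    have hint1 : Integrable (fun γ => f γ * (starRingEnd ℂ) ((P g) γ)) ν := by
      have := L2.integrable_inner (𝕜 := ℂ) (P g) f
      refine this.congr ?_
      filter_upwards with γ
      rw [RCLike.inner_apply, mul_comm]
    have hint2 : Integrable (fun γ => (P f) γ * (starRingEnd ℂ) (g γ)) ν := by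
      have := L2.integrable_inner (𝕜 := ℂ) g (P f)
      refine this.congr ?_
      filter_upwards with γ
      rw [RCLike.inner_apply, mul_comm]
    have hFint : Integrable F ν := hint1.sub hint2
    have hzero : ∀ x : G, ∫ γ, F γ * e x γ ∂ν = 0 := by
      intro x
      -- the relevant Lp elements
      have key : ⟪P g, (mulLp x f)⟫ = ⟪g, (mulLp x (P f))⟫ := by
        have hPh : P (f - P f) = 0 := by
          rw [map_sub, hidem, sub_self]
        have hPsisub : (mulLp x f) - (mulLp x (P f)) = mulLp x (f - P f) := by
          refine (Lp.ext ?_).symm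
          filter_upwards [hmul_coe x (f - P f), hmul_coe x f, hmul_coe x (P f),
            Lp.coeFn_sub (mulLp x f) (mulLp x (P f)), Lp.coeFn_sub f (P f)] with γ h1 h2 h3 h4 h5
          rw [h1, h4, h5]
          simp only [Pi.sub_apply]
          rw [h2, h3]
          ring
        -- ⟪P g, (mulLp x f) - (mulLp x (P f))⟫ = ⟪(mulLp (-x) (P g)), f - P f⟫ = 0
        have horth : ⟪P g, (mulLp x f) - (mulLp x (P f))⟫ = 0 := by
          rw [hPsisub]
          have hTeq : ⟪(P g : Lp ℂ 2 ν), mulLp x (f - P f)⟫ = ⟪(mulLp (-x) (P g)), f - P f⟫ := by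
            rw [L2.inner_def, L2.inner_def]
            refine integral_congr_ae ?_
            filter_upwards [hmul_coe x (f - P f), hmul_coe (-x) (P g),
              Lp.coeFn_sub f (P f)] with γ h1 h2 h3
            rw [RCLike.inner_apply, RCLike.inner_apply, h1, h2, h3, Pi.sub_apply,
              map_mul, hconj, neg_neg]
            ring
          rw [hTeq, ← hPmul (-x) g, hsa, hPh, inner_zero_right]
        have h1 : ⟪(P g : Lp ℂ 2 ν), (mulLp x f)⟫ = ⟪P g, (mulLp x (P f))⟫ := by
          have := horth
          rw [inner_sub_right, sub_eq_zero] at this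
          exact this
        rw [h1]
        conv_rhs => rw [← hPmul x f]
        exact hsa g _
      -- rewrite the integral as a difference of inner products
      have hi1 : ∫ γ, (f γ * (starRingEnd ℂ) ((P g) γ)) * e x γ ∂ν = ⟪P g, (mulLp x f)⟫ := by
        rw [L2.inner_def]
        refine (integral_congr_ae ?_).symm
        filter_upwards [hmul_coe x f] with γ h1
        rw [RCLike.inner_apply, h1]
        ring
      have hi2 : ∫ γ, ((P f) γ * (starRingEnd ℂ) (g γ)) * e x γ ∂ν = ⟪g, (mulLp x (P f))⟫ := by
        rw [L2.inner_def]
        refine (integral_congr_ae ?_).symm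
        filter_upwards [hmul_coe x (P f)] with γ h1
        rw [RCLike.inner_apply, h1]
        ring
      have hsplit : ∫ γ, F γ * e x γ ∂ν
          = ∫ γ, (f γ * (starRingEnd ℂ) ((P g) γ)) * e x γ ∂ν
            - ∫ γ, ((P f) γ * (starRingEnd ℂ) (g γ)) * e x γ ∂ν := by
        rw [← integral_sub]
        · refine integral_congr_ae ?_
          filter_upwards with γ
          simp only [hF]
          ring
        · exact (hint1.bdd_mul ((he_meas x).aestronglyMeasurable)
            (c := 1) (Filter.Eventually.of_forall fun γ => le_of_eq (he_norm x γ))).congr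
            (Filter.Eventually.of_forall fun γ => mul_comm _ _)
        · exact (hint2.bdd_mul ((he_meas x).aestronglyMeasurable)
            (c := 1) (Filter.Eventually.of_forall fun γ => le_of_eq (he_norm x γ))).congr
            (Filter.Eventually.of_forall fun γ => mul_comm _ _)
      rw [hsplit, hi1, hi2, key, sub_self]
    have := hdet F hFint hzero
    filter_upwards [this] with γ hγ
    have : F γ = 0 := hγ
    rw [hF] at this
    exact sub_eq_zero.mp this
  refine ⟨part1, ?_⟩
  -- Part 2: construct a strictly positive L² function
  obtain ⟨g0, hg0pos, hg0meas, hg0int⟩ :=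
    exists_pos_lintegral_lt_of_sigmaFinite ν (ε := 1) one_ne_zero
  set wfun : Gh → ℂ := fun γ => (Real.sqrt (g0 γ) : ℂ) with hwfun
  have hwne : ∀ γ, wfun γ ≠ 0 := by
    intro γ
    simp only [hwfun, ne_eq, Complex.ofReal_eq_zero]
    exact ne_of_gt (Real.sqrt_pos.mpr (by exact_mod_cast hg0pos γ))
  have hwmeas : Measurable wfun :=
    Complex.measurable_ofReal.comp (Real.continuous_sqrt.measurable.comp hg0meas.coe_nnreal_real)
  have hwmem : MemLp wfun 2 ν := by
    rw [memLp_two_iff_integrable_sq_norm hwmeas.aestronglyMeasurable]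
    have heq : (fun γ => ‖wfun γ‖ ^ 2) = fun γ => ((g0 γ : ℝ)) := by
      funext γ
      rw [hwfun]
      rw [Complex.norm_real, Real.norm_eq_abs, abs_of_nonneg (Real.sqrt_nonneg _),
        Real.sq_sqrt (by positivity)]
    rw [heq]
    refine ⟨(hg0meas.coe_nnreal_real).aestronglyMeasurable, ?_⟩
    rw [hasFiniteIntegral_def]
    have : ∀ γ, (‖(g0 γ : ℝ)‖₊ : ℝ≥0∞) = (g0 γ : ℝ≥0∞) := by
      intro γ; rw [NNReal.nnnorm_eq]
    calc ∫⁻ γ, (‖(g0 γ : ℝ)‖₊ : ℝ≥0∞) ∂ν = ∫⁻ γ, (g0 γ : ℝ≥0∞) ∂ν :=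
          lintegral_congr fun γ => this γ
      _ < 1 := hg0int
      _ < ⊤ := ENNReal.one_lt_top
  set w : Lp ℂ 2 ν := hwmem.toLp wfun with hw
  have hw_coe : (w : Gh → ℂ) =ᵐ[ν] wfun := MemLp.coeFn_toLp _
  -- a measurable representative of P w
  set B : Gh → ℂ := (Lp.aestronglyMeasurable (P w)).mk _ with hB
  have hBmeas : Measurable B :=
    (Lp.aestronglyMeasurable (P w)).stronglyMeasurable_mk.measurable
  have hB_ae : (P w : Gh → ℂ) =ᵐ[ν] B := (Lp.aestronglyMeasurable (P w)).ae_eq_mk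
  set q : Gh → ℂ := fun γ => B γ / wfun γ with hq
  have hqmeas : Measurable q := hBmeas.div hwmeas
  have hBq : ∀ γ, B γ = q γ * wfun γ := by
    intro γ
    rw [hq]
    rw [div_mul_cancel₀ _ (hwne γ)]
  -- q takes only values 0 and 1 a.e.
  have hq01 : ∀ᵐ γ ∂ν, q γ = 0 ∨ q γ = 1 := by
    have h1 := part1 (P w) w
    rw [hidem] at h1
    filter_upwards [h1, hB_ae, hw_coe] with γ hγ hBγ hwγ
    have hγ' : (P w) γ * (starRingEnd ℂ) ((P w) γ) = (P w) γ * (starRingEnd ℂ) (w γ) := hγ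
    rw [hBγ, hwγ] at hγ'
    rw [hBq γ] at hγ'
    have hwc : (starRingEnd ℂ) (wfun γ) ≠ 0 :=
      (map_ne_zero (starRingEnd ℂ)).mpr (hwne γ)
    have hqq : q γ * (starRingEnd ℂ) (q γ) = q γ := by
      have hwn : wfun γ * (starRingEnd ℂ) (wfun γ) ≠ 0 := mul_ne_zero (hwne γ) hwc
      apply mul_right_cancel₀ hwn
      calc q γ * (starRingEnd ℂ) (q γ) * (wfun γ * (starRingEnd ℂ) (wfun γ))
          = (q γ * wfun γ) * (starRingEnd ℂ) (q γ * wfun γ) := by rw [map_mul]; ring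
        _ = (q γ * wfun γ) * (starRingEnd ℂ) (wfun γ) := hγ'
        _ = q γ * (wfun γ * (starRingEnd ℂ) (wfun γ)) := by ring
    by_cases hq0 : q γ = 0
    · exact Or.inl hq0
    · right
      have : (starRingEnd ℂ) (q γ) = 1 := by
        apply mul_left_cancel₀ hq0
        rw [hqq, mul_one]
      have := congrArg (starRingEnd ℂ) this
      simpa using this
  -- P is multiplication by q
  have hPq : ∀ f : Lp ℂ 2 ν, ∀ᵐ γ ∂ν, (P f) γ = q γ * f γ := by
    intro f
    filter_upwards [part1 f w, hB_ae, hw_coe, hq01] with γ hγ hBγ hwγ hq01γ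
    have hγ' : f γ * (starRingEnd ℂ) (B γ) = (P f) γ * (starRingEnd ℂ) (wfun γ) := by
      rw [← hBγ, ← hwγ]; exact hγ
    rw [hBq γ, map_mul] at hγ'
    have hwc : (starRingEnd ℂ) (wfun γ) ≠ 0 :=
      (map_ne_zero (starRingEnd ℂ)).mpr (hwne γ)
    have hqr : (starRingEnd ℂ) (q γ) = q γ := by
      rcases hq01γ with h | h <;> rw [h] <;> simp
    have : (q γ * f γ) * (starRingEnd ℂ) (wfun γ) = (P f) γ * (starRingEnd ℂ) (wfun γ) := by
      rw [← hγ', hqr]; ring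
    exact (mul_right_cancel₀ hwc this).symm
  -- the measurable set
  refine ⟨(q ⁻¹' {1})ᶜ, (hqmeas (measurableSet_singleton 1)).compl, ?_⟩
  intro f
  filter_upwards [hPq f, hq01] with γ hγ hq01γ
  rw [compl_compl, hγ]
  rcases hq01γ with h | h
  · have : γ ∉ q ⁻¹' {1} := by
      simp only [Set.mem_preimage, Set.mem_singleton_iff, h]
      norm_num
    rw [Set.indicator_of_notMem this, h, zero_mul]
  · have : γ ∈ q ⁻¹' {1} := by simp [h]
    rw [Set.indicator_of_mem this, h, one_mul]
end

section
/- Let G be a second countable LCA group, H ⊆ G a countable discrete subgroup, and V ⊆ L²(G) a translation-invariant closed subspace. Suppose A ⊆ L²(G) is an at most countable set with V equal to the closed span of {T_h φ : h ∈ H, φ ∈ A}. If V = {f ∈ L²(G) : f̂ = 0 a.e. on Ẽ} for a measurable Ẽ ⊆ Ĝ, then Ẽ equals E := ⋂_{φ∈A} {γ : φ̂(γ) = 0} up to a set of Haar measure zero; in particular V = {f ∈ L²(G) : f̂ = 0 a.e. on E}. -/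
open MeasureTheory Filter Topology
open scoped ENNReal

/-- If a translation-invariant space `V ⊆ L²(G)` is generated, as an `H`-invariant space,
by a countable set `A` (i.e. `V` is the closed span of `{T_h φ : h ∈ H, φ ∈ A}`), and
`V = {f : 𝓕 f = 0 a.e. on Ẽ}`, then `Ẽ` coincides, up to a null set, with
`E = ⋂_{φ ∈ A} {𝓕 φ = 0}`; in particular `V = {f : 𝓕 f = 0 a.e. on E}`. -/
theorem translation_invariant_zero_set
    {G : Type*} [AddCommGroup G] [TopologicalSpace G] [IsTopologicalAddGroup G]
    [LocallyCompactSpace G] [SecondCountableTopology G]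
    [MeasurableSpace G] [BorelSpace G]
    (μ : Measure G) [μ.IsAddHaarMeasure]
    {Gh : Type*} [MeasurableSpace Gh] (ν : Measure Gh) [SigmaFinite ν]
    (T : G → (Lp ℂ 2 μ ≃ₗᵢ[ℂ] Lp ℂ 2 μ))
    (hT : ∀ (x : G) (f : Lp ℂ 2 μ), ∀ᵐ y ∂μ, (T x f) y = f (y - x))
    (e : G → Gh → ℂ) (he_meas : ∀ x, Measurable (e x))
    (he_norm : ∀ x γ, ‖e x γ‖ = 1)
    (he_hom : ∀ x y γ, e (x + y) γ = e x γ * e y γ)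
    (hdet : ∀ F : Gh → ℂ, Integrable F ν →
      (∀ x : G, ∫ γ, F γ * e x γ ∂ν = 0) → F =ᵐ[ν] 0)
    (𝓕 : Lp ℂ 2 μ ≃ₗᵢ[ℂ] Lp ℂ 2 ν)
    (h𝓕 : ∀ (x : G) (f : Lp ℂ 2 μ),
      ∀ᵐ γ ∂ν, (𝓕 (T x f)) γ = e (-x) γ * (𝓕 f) γ)
    (Hl : AddSubgroup G) (hHl_count : (Hl : Set G).Countable)
    (hHl_disc : DiscreteTopology Hl)
    (A : Set (Lp ℂ 2 μ)) (hA : A.Countable)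
    (V : Submodule ℂ (Lp ℂ 2 μ))
    (hVgen : V = (Submodule.span ℂ
      {g : Lp ℂ 2 μ | ∃ h ∈ Hl, ∃ φ ∈ A, g = T h φ}).topologicalClosure)
    (hVti : ∀ (x : G), ∀ f ∈ V, T x f ∈ V)
    (Et : Set Gh) (hEt : MeasurableSet Et)
    (hVE : ∀ f : Lp ℂ 2 μ, f ∈ V ↔ ∀ᵐ γ ∂ν, γ ∈ Et → (𝓕 f) γ = 0) :
    ν (symmDiff Et {γ : Gh | ∀ φ ∈ A, (𝓕 φ) γ = 0}) = 0 ∧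
    ∀ f : Lp ℂ 2 μ, f ∈ V ↔
      ∀ᵐ γ ∂ν, (∀ φ ∈ A, (𝓕 φ) γ = 0) → (𝓕 f) γ = 0 := by
  set E : Set Gh := {γ : Gh | ∀ φ ∈ A, (𝓕 φ) γ = 0} with hE_def
  -- E is measurable
  have hE_meas : MeasurableSet E := by
    have : E = ⋂ φ ∈ A, ((𝓕 φ) : Gh → ℂ) ⁻¹' {0} := by
      ext γ; simp [hE_def]
    rw [this]
    exact MeasurableSet.biInter hA fun φ _ =>
      ((Lp.stronglyMeasurable (𝓕 φ)).measurable) (measurableSet_singleton 0)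
  -- each φ ∈ A belongs to V
  have hT0 : ∀ f : Lp ℂ 2 μ, T 0 f = f := by
    intro f
    apply Subtype.ext
    apply MeasureTheory.AEEqFun.ext
    filter_upwards [hT 0 f] with y hy
    simpa using hy
  have hAV : ∀ φ ∈ A, φ ∈ V := by
    intro φ hφ
    rw [hVgen]
    exact Submodule.le_topologicalClosure _
      (Submodule.subset_span ⟨0, zero_mem _, φ, hφ, (hT0 φ).symm⟩)
  -- Et ⊆ E a.e.
  have hEtE : ∀ᵐ γ ∂ν, γ ∈ Et → γ ∈ E := by
    have : ∀ φ ∈ A, ∀ᵐ γ ∂ν, γ ∈ Et → (𝓕 φ) γ = 0 := fun φ hφ => (hVE φ).mp (hAV φ hφ)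
    have h2 := (ae_ball_iff hA).mpr this
    filter_upwards [h2] with γ hγ hEt φ hφ
    exact hγ φ hφ hEt
  have hEtE_null : ν (Et \ E) = 0 := by
    rw [measure_eq_zero_iff_ae_notMem]
    filter_upwards [hEtE] with γ hγ hmem
    exact hmem.2 (hγ hmem.1)
  -- the submodule of f with 𝓕 f vanishing a.e. on E
  set W : Submodule ℂ (Lp ℂ 2 μ) :=
    { carrier := {f : Lp ℂ 2 μ | ∀ᵐ γ ∂ν, γ ∈ E → (𝓕 f) γ = 0}
      zero_mem' := by
        filter_upwards [Lp.coeFn_zero ℂ 2 ν] with γ h _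
        rw [map_zero]; exact h
      add_mem' := by
        intro f g hf hg
        have := Lp.coeFn_add (𝓕 f) (𝓕 g)
        filter_upwards [hf, hg, this] with γ h1 h2 h3 hγ
        rw [map_add, h3, Pi.add_apply, h1 hγ, h2 hγ, add_zero]
      smul_mem' := by
        intro c f hf
        have := Lp.coeFn_smul c (𝓕 f)
        filter_upwards [hf, this] with γ h1 h2 hγ
        rw [𝓕.map_smul, h2, Pi.smul_apply, h1 hγ, smul_zero] } with hW_def
  have hWmem : ∀ f : Lp ℂ 2 μ, f ∈ W ↔ ∀ᵐ γ ∂ν, γ ∈ E → (𝓕 f) γ = 0 := fun f => Iff.rfl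
  -- generators lie in W
  have hgen : {g : Lp ℂ 2 μ | ∃ h ∈ Hl, ∃ φ ∈ A, g = T h φ} ⊆ (W : Set (Lp ℂ 2 μ)) := by
    rintro g ⟨h, hh, φ, hφ, rfl⟩
    rw [SetLike.mem_coe, hWmem]
    filter_upwards [h𝓕 h φ] with γ h1 hγ
    rw [h1, hγ φ hφ, mul_zero]
  have hspan : Submodule.span ℂ {g : Lp ℂ 2 μ | ∃ h ∈ Hl, ∃ φ ∈ A, g = T h φ} ≤ W :=
    Submodule.span_le.mpr hgen
  -- V ⊆ W via limits
  have hVW : ∀ f ∈ V, ∀ᵐ γ ∂ν, γ ∈ E → (𝓕 f) γ = 0 := by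
    intro f hf
    rw [hVgen] at hf
    have hf' : f ∈ closure ((Submodule.span ℂ
        {g : Lp ℂ 2 μ | ∃ h ∈ Hl, ∃ φ ∈ A, g = T h φ}) : Set (Lp ℂ 2 μ)) := by
      rw [← Submodule.topologicalClosure_coe]; exact hf
    obtain ⟨u, hu_mem, hu_tendsto⟩ := mem_closure_iff_seq_limit.mp hf'
    have htend : Tendsto (fun n => 𝓕 (u n)) atTop (𝓝 (𝓕 f)) :=
      ((𝓕.continuous.tendsto f).comp hu_tendsto)
    have hmeas := tendstoInMeasure_of_tendsto_Lp htend
    obtain ⟨ns, _, hae⟩ := hmeas.exists_seq_tendsto_ae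
    have hvanish : ∀ᵐ γ ∂ν, ∀ n : ℕ, γ ∈ E → (𝓕 (u (ns n))) γ = 0 :=
      ae_all_iff.mpr fun n => (hWmem _).mp (hspan (hu_mem (ns n)))
    filter_upwards [hae, hvanish] with γ h1 h2 hγ
    have : Tendsto (fun n : ℕ => (0 : ℂ)) atTop (𝓝 ((𝓕 f) γ)) := by
      refine h1.congr fun n => ?_
      exact h2 n hγ
    exact tendsto_nhds_unique this tendsto_const_nhds
  -- E ⊆ Et a.e.
  have hEEt_null : ν (E \ Et) = 0 := by
    by_contra hne
    obtain ⟨S, hS_meas, hS_sub, hS_pos, hS_fin⟩ :=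
      MeasureTheory.Measure.exists_subset_measure_lt_top (hE_meas.diff hEt) (pos_iff_ne_zero.mpr hne)
    set g : Lp ℂ 2 ν := indicatorConstLp 2 hS_meas hS_fin.ne (1 : ℂ) with hg_def
    set f : Lp ℂ 2 μ := 𝓕.symm g with hf_def
    have h𝓕f : 𝓕 f = g := 𝓕.apply_symm_apply g
    have hfV : f ∈ V := by
      rw [hVE]
      filter_upwards [indicatorConstLp_coeFn (p := 2) (μ := ν) (c := (1:ℂ)) (hs := hS_meas) (hμs := hS_fin.ne)]
        with γ hγ hEtγ
      rw [h𝓕f, hγ]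
      exact Set.indicator_of_notMem (fun hS => (hS_sub hS).2 hEtγ) _
    have := hVW f hfV
    have hS0 : ν S = 0 := by
      rw [measure_eq_zero_iff_ae_notMem]
      filter_upwards [this,
        indicatorConstLp_coeFn (p := 2) (μ := ν) (c := (1:ℂ)) (hs := hS_meas) (hμs := hS_fin.ne)]
        with γ h1 h2 hSγ
      have hEγ : γ ∈ E := (hS_sub hSγ).1
      have := h1 hEγ
      rw [h𝓕f, h2, Set.indicator_of_mem hSγ] at this
      exact one_ne_zero this
    exact hS_pos.ne' hS0
  constructor
  · rw [Set.symmDiff_def]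
    exact measure_union_null hEtE_null hEEt_null
  · intro f
    constructor
    · exact hVW f
    · intro h
      rw [hVE]
      have hnm : ∀ᵐ γ ∂ν, γ ∉ Et \ E := measure_eq_zero_iff_ae_notMem.mp hEtE_null
      filter_upwards [h, hnm] with γ h1 h2 hEtγ
      by_cases hEγ : γ ∈ E
      · exact h1 hEγ
      · exact absurd ⟨hEtγ, hEγ⟩ h2
end

section
/- Let (Ω, μ) be a measure space with μ(Ω) < ∞, H a separable Hilbert space, and F₁, …, F_m ∈ L²(Ω, H). Define the Gramian G_F(ω) ∈ ℂ^{m×m} by (G_F(ω))_{ij} = ⟨F_i(ω), F_j(ω)⟩_H. Let λ_j(ω) denote its eigenvalues and y_j(ω) orthonormal left eigenvectors, depending measurably on ω. For fixed j define Φ_j(ω) = λ_j(ω)^{−1/2} Σ_{i=1}^m conj(y_{ji}(ω)) F_i(ω) if λ_j(ω) ≠ 0 and Φ_j(ω) = 0 otherwise. Then Φ_j ∈ L²(Ω, H), and in fact ∫_Ω ‖Φ_j(ω)‖²_H dμ(ω) = μ({ω : λ_j(ω) > 0}) ≤ μ(Ω). -/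
open MeasureTheory
open scoped ComplexInnerProductSpace ENNReal

/-- The normalized generators built from the Gramian of a finite data set
`F₁, …, F_m ∈ L²(Ω, H)` belong to `L²(Ω, H)`: if `λ_j(ω)` are the eigenvalues and
`y_j(ω)` measurable orthonormal left eigenvectors of the Gramian
`(G_F(ω))_{ik} = ⟨F_i(ω), F_k(ω)⟩`, and
`Φ_j(ω) = λ_j(ω)^{-1/2} Σ_i conj(y_{ji}(ω)) F_i(ω)` (with `Φ_j(ω) = 0` when
`λ_j(ω) = 0`), then `∫ ‖Φ_j(ω)‖² dμ = μ({λ_j > 0}) ≤ μ(Ω) < ∞`. -/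
theorem generator_in_L2
    {Ω : Type*} [MeasurableSpace Ω] (μ : Measure Ω) [IsFiniteMeasure μ]
    {H : Type*} [NormedAddCommGroup H] [InnerProductSpace ℂ H] [CompleteSpace H]
    [SecondCountableTopology H]
    (m : ℕ) (F : Fin m → Ω → H) (hF : ∀ i, MemLp (F i) 2 μ)
    (lam : Fin m → Ω → ℝ) (hlam_meas : ∀ j, Measurable (lam j))
    (y : Fin m → Ω → Fin m → ℂ) (hy_meas : ∀ j i, Measurable fun ω => y j ω i)
    (heig : ∀ᵐ ω ∂μ, ∀ j i : Fin m,
      ∑ k, y j ω k * ⟪F k ω, F i ω⟫ = (lam j ω : ℂ) * y j ω i)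
    (horth : ∀ᵐ ω ∂μ, ∀ j j' : Fin m,
      ∑ k, y j ω k * (starRingEnd ℂ) (y j' ω k) = if j = j' then 1 else 0)
    (j : Fin m) (Φ : Ω → H)
    (hΦ : ∀ ω, Φ ω = if lam j ω ≠ 0
      then ((Real.sqrt (lam j ω))⁻¹ : ℂ) •
        ∑ i, (starRingEnd ℂ) (y j ω i) • F i ω
      else 0) :
    MemLp Φ 2 μ ∧
    ∫ ω, ‖Φ ω‖ ^ 2 ∂μ = (μ {ω | 0 < lam j ω}).toReal ∧
    (μ {ω | 0 < lam j ω}).toReal ≤ (μ Set.univ).toReal := by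
  classical
  set s : Set Ω := {ω | 0 < lam j ω} with hs_def
  have hsm : MeasurableSet s := measurableSet_lt measurable_const (hlam_meas j)
  -- key pointwise identity, a.e.
  have hkey : ∀ᵐ ω ∂μ, ‖Φ ω‖ ^ 2 = s.indicator (fun _ => (1:ℝ)) ω := by
    filter_upwards [heig, horth] with ω h1 h2
    set S : H := ∑ i, (starRingEnd ℂ) (y j ω i) • F i ω with hS
    have hSS : (⟪S, S⟫ : ℂ) = (lam j ω : ℂ) := by
      have expand : (⟪S, S⟫ : ℂ)
          = ∑ k, (starRingEnd ℂ) (y j ω k) * ∑ i, y j ω i * (⟪F i ω, F k ω⟫ : ℂ) := by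
        rw [hS, inner_sum]
        refine Finset.sum_congr rfl fun k _ => ?_
        rw [inner_smul_right]
        congr 1
        rw [sum_inner]
        refine Finset.sum_congr rfl fun i _ => ?_
        rw [inner_smul_left, Complex.conj_conj]
      rw [expand]
      have step : ∀ k, (starRingEnd ℂ) (y j ω k) * ∑ i, y j ω i * (⟪F i ω, F k ω⟫ : ℂ)
          = (lam j ω : ℂ) * (y j ω k * (starRingEnd ℂ) (y j ω k)) := by
        intro k
        rw [h1 j k]; ring
      rw [Finset.sum_congr rfl fun k _ => step k, ← Finset.mul_sum, h2 j j]
      simp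
    have hnorm : ‖S‖ ^ 2 = lam j ω := by
      have := inner_self_eq_norm_sq (𝕜 := ℂ) S
      rw [hSS] at this
      simpa using this.symm
    have hlam_nonneg : 0 ≤ lam j ω := hnorm ▸ sq_nonneg _
    by_cases h : lam j ω = 0
    · have hω : ω ∉ s := by simp [hs_def, h]
      simp [hΦ ω, h, Set.indicator_of_notMem hω]
    · have hpos : 0 < lam j ω := lt_of_le_of_ne hlam_nonneg (Ne.symm h)
      have hω : ω ∈ s := hpos
      rw [hΦ ω, if_pos h, norm_smul, Set.indicator_of_mem hω]
      have h1' : ‖((Real.sqrt (lam j ω))⁻¹ : ℂ)‖ = (Real.sqrt (lam j ω))⁻¹ := by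
        rw [norm_inv, Complex.norm_real, Real.norm_eq_abs,
          abs_of_nonneg (Real.sqrt_nonneg _)]
      have hsq : Real.sqrt (lam j ω) ^ 2 = lam j ω := Real.sq_sqrt hlam_nonneg
      rw [h1', mul_pow, ← hS, hnorm, inv_pow, hsq]
      exact inv_mul_cancel₀ h
  -- measurability of Φ
  have hΦmeas : AEStronglyMeasurable Φ μ := by
    have heq : Φ = fun ω => Set.indicator {ω | lam j ω ≠ 0}
        (fun ω => ((Real.sqrt (lam j ω))⁻¹ : ℂ) •
          ∑ i, (starRingEnd ℂ) (y j ω i) • F i ω) ω := by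
      funext ω
      rw [hΦ ω]
      by_cases h : lam j ω ≠ 0 <;> simp [h, Set.indicator]
    rw [heq]
    refine AEStronglyMeasurable.indicator ?_ ?_
    · refine AEStronglyMeasurable.smul ?_ ?_
      · exact Measurable.aestronglyMeasurable (by fun_prop)
      · exact Finset.aestronglyMeasurable_fun_sum _ fun i _ =>
          ((Complex.continuous_conj.measurable.comp (hy_meas j i)).aestronglyMeasurable.smul
            (hF i).1)
    · exact (hlam_meas j) (measurableSet_singleton 0) |>.compl
  have hbound : ∀ᵐ ω ∂μ, ‖Φ ω‖ ≤ 1 := by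
    filter_upwards [hkey] with ω hω
    have h2 : ‖Φ ω‖ ^ 2 ≤ 1 := by
      rw [hω]
      by_cases h : ω ∈ s <;> simp [h]
    nlinarith [norm_nonneg (Φ ω)]
  refine ⟨MemLp.of_bound hΦmeas 1 hbound, ?_, ?_⟩
  · rw [integral_congr_ae hkey, integral_indicator_const _ hsm]
    simp
    rfl
  · exact ENNReal.toReal_mono (measure_ne_top μ _) (measure_mono (Set.subset_univ _))
end

section
/- Let G be a second countable LCA group with dual Ĝ, H ⊆ G a uniform lattice with annihilator H* ⊆ Ĝ discrete and countable, Ω ⊆ Ĝ a measurable section of Ĝ/H* of finite measure. Let A ⊆ L²(G) be at most countable with φ̂ supported in Ω (i.e. φ̂ = 0 a.e. outside Ω) for every φ ∈ A, and let V be the closed span of {T_h φ : h ∈ H, φ ∈ A}. Then V is translation invariant: T_x V ⊆ V for every x ∈ G; in particular V = {f ∈ L²(G) : f̂ = 0 a.e. on E} where E = ⋂_{φ∈A} {φ̂ = 0} ⊆ Ω up to null sets. -/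
open MeasureTheory Filter
open scoped ENNReal ComplexConjugate

/-- If every generator `φ ∈ A` has Fourier transform supported in a measurable section
`Ω` of `Ĝ/H*` (for a uniform lattice `H` of a second countable LCA group `G`), then the
`H`-invariant space `V` generated by `A` is invariant under all translations; in
particular `V = {f : 𝓕 f = 0 a.e. on E}` with `E = ⋂_{φ ∈ A}{𝓕 φ = 0}`.  The key fact
that characters are a.e. limits on `Ω` of uniformly bounded trigonometric polynomials in
the characters of `H` is taken as a hypothesis. -/
theorem SI_space_with_generators_supported_in_section_is_translation_invariant
    {G : Type*} [AddCommGroup G] [TopologicalSpace G] [IsTopologicalAddGroup G]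
    [LocallyCompactSpace G] [SecondCountableTopology G]
    [MeasurableSpace G] [BorelSpace G]
    (μ : Measure G) [μ.IsAddHaarMeasure]
    {Gh : Type*} [MeasurableSpace Gh] (ν : Measure Gh) [SigmaFinite ν]
    (T : G → (Lp ℂ 2 μ ≃ₗᵢ[ℂ] Lp ℂ 2 μ))
    (hT : ∀ (x : G) (f : Lp ℂ 2 μ), ∀ᵐ y ∂μ, (T x f) y = f (y - x))
    (e : G → Gh → ℂ) (he_meas : ∀ x, Measurable (e x))
    (he_norm : ∀ x γ, ‖e x γ‖ = 1)
    (he_hom : ∀ x y γ, e (x + y) γ = e x γ * e y γ)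
    (hdet : ∀ F : Gh → ℂ, Integrable F ν →
      (∀ x : G, ∫ γ, F γ * e x γ ∂ν = 0) → F =ᵐ[ν] 0)
    (𝓕 : Lp ℂ 2 μ ≃ₗᵢ[ℂ] Lp ℂ 2 ν)
    (h𝓕 : ∀ (x : G) (f : Lp ℂ 2 μ),
      ∀ᵐ γ ∂ν, (𝓕 (T x f)) γ = e (-x) γ * (𝓕 f) γ)
    (Hl : AddSubgroup G) (hHl_count : (Hl : Set G).Countable)
    (hHl_disc : DiscreteTopology Hl) (hHl_cocompact : CompactSpace (G ⧸ Hl))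
    (Om : Set Gh) (hOm_meas : MeasurableSet Om) (hOm_fin : ν Om < ∞)
    (happrox : ∀ x : G, ∃ (p : ℕ → Gh → ℂ) (C : ℝ),
      (∀ n, ∃ (s : Finset G) (c : G → ℂ), (∀ h ∈ s, h ∈ Hl) ∧
        ∀ γ, p n γ = ∑ h ∈ s, c h * e h γ) ∧
      (∀ n γ, ‖p n γ‖ ≤ C) ∧
      (∀ᵐ γ ∂ν, γ ∈ Om →
        Filter.Tendsto (fun n => p n γ) Filter.atTop (nhds (e (-x) γ))))
    (A : Set (Lp ℂ 2 μ)) (hA : A.Countable)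
    (hsupp : ∀ φ ∈ A, ∀ᵐ γ ∂ν, γ ∉ Om → (𝓕 φ) γ = 0)
    (V : Submodule ℂ (Lp ℂ 2 μ))
    (hVgen : V = (Submodule.span ℂ
      {g : Lp ℂ 2 μ | ∃ h ∈ Hl, ∃ φ ∈ A, g = T h φ}).topologicalClosure) :
    (∀ (x : G), ∀ f ∈ V, T x f ∈ V) ∧
    ∀ f : Lp ℂ 2 μ, f ∈ V ↔
      ∀ᵐ γ ∂ν, (∀ φ ∈ A, (𝓕 φ) γ = 0) → (𝓕 f) γ = 0 := by
  classical
  -- basic facts about the characters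
  have he_ne : ∀ x γ, e x γ ≠ 0 := by
    intro x γ h0
    have := he_norm x γ
    rw [h0] at this
    simp at this
  have he0 : ∀ γ, e 0 γ = 1 := by
    intro γ
    have h : e 0 γ * e 0 γ = e 0 γ * 1 := by
      rw [mul_one, ← he_hom, add_zero]
    exact mul_left_cancel₀ (he_ne 0 γ) h
  have he_conj : ∀ x γ, conj (e x γ) = e (-x) γ := by
    intro x γ
    have h1 : e x γ * e (-x) γ = 1 := by
      rw [← he_hom, add_neg_cancel, he0]
    have h2 : e x γ * conj (e x γ) = 1 := by
      rw [Complex.mul_conj]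
      have : Complex.normSq (e x γ) = 1 := by
        rw [Complex.normSq_eq_norm_sq, he_norm]
        norm_num
      rw [this]
      norm_num
    exact mul_left_cancel₀ (he_ne x γ) (h2.trans h1.symm)
  -- the candidate space W
  set W : Submodule ℂ (Lp ℂ 2 μ) :=
    { carrier := {f | ∀ᵐ γ ∂ν, (∀ φ ∈ A, (𝓕 φ) γ = 0) → (𝓕 f) γ = 0}
      add_mem' := by
        intro f g hf hg
        filter_upwards [hf, hg, Lp.coeFn_add (𝓕 f) (𝓕 g)] with γ h1 h2 h3 hz
        rw [map_add, h3, Pi.add_apply, h1 hz, h2 hz, add_zero]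
      zero_mem' := by
        filter_upwards [Lp.coeFn_zero ℂ 2 ν] with γ h1 _
        rw [map_zero]
        exact h1
      smul_mem' := by
        intro c f hf
        filter_upwards [hf, Lp.coeFn_smul c (𝓕 f)] with γ h1 h2 hz
        rw [_root_.map_smul, h2, Pi.smul_apply, h1 hz, smul_zero] } with hWdef
  have hWmem : ∀ f : Lp ℂ 2 μ,
      f ∈ W ↔ ∀ᵐ γ ∂ν, (∀ φ ∈ A, (𝓕 φ) γ = 0) → (𝓕 f) γ = 0 := fun f => Iff.rfl
  -- W is closed
  have hWclosed : IsClosed (W : Set (Lp ℂ 2 μ)) := by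
    apply IsSeqClosed.isClosed
    intro fseq f hmem hlim
    have hlim2 : Tendsto (fun n => 𝓕 (fseq n)) atTop (nhds (𝓕 f)) :=
      (𝓕.continuous.tendsto f).comp hlim
    have htm : TendstoInMeasure ν (fun n => ⇑(𝓕 (fseq n))) atTop (𝓕 f) :=
      tendstoInMeasure_of_tendsto_Lp hlim2
    obtain ⟨ns, -, hae⟩ := htm.exists_seq_tendsto_ae
    have hall : ∀ᵐ γ ∂ν, ∀ n : ℕ,
        (∀ φ ∈ A, (𝓕 φ) γ = 0) → (𝓕 (fseq (ns n))) γ = 0 :=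
      ae_all_iff.2 fun n => hmem (ns n)
    filter_upwards [hall, hae] with γ h1 h2 hz
    have h3 : Tendsto (fun n => (𝓕 (fseq (ns n))) γ) atTop (nhds ((𝓕 f) γ)) := h2
    have h4 : (fun n => (𝓕 (fseq (ns n))) γ) = fun _ => (0 : ℂ) :=
      funext fun n => h1 n hz
    rw [h4] at h3
    exact (tendsto_nhds_unique h3 tendsto_const_nhds)
  -- V is closed
  have hVclosed : IsClosed (V : Set (Lp ℂ 2 μ)) := by
    rw [hVgen]
    exact Submodule.isClosed_topologicalClosure _
  -- generators lie in W, hence V ≤ W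
  have hVW : V ≤ W := by
    rw [hVgen]
    have hsub : {g : Lp ℂ 2 μ | ∃ h ∈ Hl, ∃ φ ∈ A, g = T h φ}
        ⊆ (W : Set (Lp ℂ 2 μ)) := by
      rintro g ⟨h, hh, φ, hφ, rfl⟩
      rw [SetLike.mem_coe, hWmem]
      filter_upwards [h𝓕 h φ] with γ h1 hz
      rw [h1, hz φ hφ, mul_zero]
    exact Submodule.topologicalClosure_minimal _ (Submodule.span_le.2 hsub) hWclosed
  -- generators lie in V
  have hgenV : ∀ h ∈ Hl, ∀ φ ∈ A, T h φ ∈ V := by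
    intro h hh φ hφ
    rw [hVgen]
    exact Submodule.le_topologicalClosure _ (Submodule.subset_span ⟨h, hh, φ, hφ, rfl⟩)
  -- W ≤ V via orthogonal decomposition
  haveI : CompleteSpace V := hVclosed.completeSpace_coe
  have hWV : ∀ f : Lp ℂ 2 μ, f ∈ W → f ∈ V := by
    intro f hf
    obtain ⟨y, hy, z, hz, rfl⟩ := V.exists_add_mem_mem_orthogonal f
    have hzW : z ∈ W := by
      have h := W.sub_mem hf (hVW hy)
      rwa [add_sub_cancel_left] at h
    -- key claim: for every φ ∈ A, conj (𝓕 φ) * 𝓕 z = 0 a.e.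
    have hkey : ∀ φ ∈ A,
        (fun γ => conj ((𝓕 φ) γ) * (𝓕 z) γ) =ᵐ[ν] 0 := by
      intro φ hφ
      set F : Gh → ℂ := fun γ => conj ((𝓕 φ) γ) * (𝓕 z) γ with hFdef
      have hFint : Integrable F ν := by
        have := L2.integrable_inner (𝕜 := ℂ) (𝓕 φ) (𝓕 z)
        refine this.congr (Eventually.of_forall fun γ => ?_)
        simp only [F, RCLike.inner_apply]
        ring
      have hHl0 : ∀ h ∈ Hl, ∫ γ, F γ * e h γ ∂ν = 0 := by
        intro h hh
        have horth : inner (𝕜 := ℂ) (T h φ) z = 0 :=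
          (Submodule.mem_orthogonal V z).1 hz (T h φ) (hgenV h hh φ hφ)
        have h1 : inner (𝕜 := ℂ) (𝓕 (T h φ)) (𝓕 z) = 0 := by
          rw [LinearIsometryEquiv.inner_map_map]
          exact horth
        rw [L2.inner_def] at h1
        rw [← h1]
        apply integral_congr_ae
        filter_upwards [h𝓕 h φ] with γ hγ
        rw [RCLike.inner_apply, hγ, map_mul, he_conj (-h) γ, neg_neg]
        simp only [F]
        ring
      have hpoly : ∀ (s : Finset G) (c : G → ℂ), (∀ h ∈ s, h ∈ Hl) →
          ∫ γ, F γ * (∑ h ∈ s, c h * e h γ) ∂ν = 0 := by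
        intro s c hs
        have hterm : ∀ h ∈ s, Integrable (fun γ => F γ * (c h * e h γ)) ν := by
          intro h _
          have h1 : Integrable (fun γ => (c h * e h γ) * F γ) ν :=
            hFint.bdd_mul ((he_meas h).const_mul (c h)).aestronglyMeasurable
              (Eventually.of_forall fun γ => (by rw [norm_mul, he_norm, mul_one] : ‖c h * e h γ‖ ≤ ‖c h‖))
          exact h1.congr (Eventually.of_forall fun γ => mul_comm _ _)
        calc ∫ γ, F γ * (∑ h ∈ s, c h * e h γ) ∂ν
            = ∫ γ, ∑ h ∈ s, F γ * (c h * e h γ) ∂ν := by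
              simp only [Finset.mul_sum]
          _ = ∑ h ∈ s, ∫ γ, F γ * (c h * e h γ) ∂ν := integral_finset_sum s hterm
          _ = 0 := by
              refine Finset.sum_eq_zero fun h hh => ?_
              have h2 : (fun γ => F γ * (c h * e h γ))
                  = fun γ => c h * (F γ * e h γ) := funext fun γ => by ring
              rw [h2, integral_const_mul, hHl0 h (hs h hh), mul_zero]
      have hall : ∀ x : G, ∫ γ, F γ * e x γ ∂ν = 0 := by
        intro x
        obtain ⟨p, C, hrep, hbdd, hconv⟩ := happrox (-x)
        have hpmeas : ∀ n, Measurable (p n) := by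
          intro n
          obtain ⟨s, c, -, hps⟩ := hrep n
          have : p n = fun γ => ∑ h ∈ s, c h * e h γ := funext hps
          rw [this]
          exact Finset.measurable_sum s fun h _ => (he_meas h).const_mul (c h)
        have hpn0 : ∀ n, ∫ γ, F γ * p n γ ∂ν = 0 := by
          intro n
          obtain ⟨s, c, hs, hps⟩ := hrep n
          have : (fun γ => F γ * p n γ)
              = fun γ => F γ * (∑ h ∈ s, c h * e h γ) := funext fun γ => by rw [hps]
          rw [this]
          exact hpoly s c hs
        have hsupF : ∀ᵐ γ ∂ν, γ ∉ Om → F γ = 0 := by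
          filter_upwards [hsupp φ hφ] with γ h1 hγ
          simp only [F, h1 hγ, map_zero, zero_mul]
        have hconv' : ∀ᵐ γ ∂ν,
            Tendsto (fun n => F γ * p n γ) atTop (nhds (F γ * e x γ)) := by
          filter_upwards [hconv, hsupF] with γ h1 h2
          by_cases hγ : γ ∈ Om
          · have h3 := (h1 hγ).const_mul (F γ)
            rwa [neg_neg] at h3
          · rw [h2 hγ]
            simpa using tendsto_const_nhds
        have hlim : Tendsto (fun n => ∫ γ, F γ * p n γ ∂ν) atTop
            (nhds (∫ γ, F γ * e x γ ∂ν)) := by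
          refine tendsto_integral_of_dominated_convergence (fun γ => ‖F γ‖ * C)
            (fun n => hFint.1.mul (hpmeas n).aestronglyMeasurable)
            (hFint.norm.mul_const C) (fun n => ?_) hconv'
          exact Eventually.of_forall fun γ => by
            rw [norm_mul]
            exact mul_le_mul_of_nonneg_left (hbdd n γ) (norm_nonneg _)
        simp only [hpn0] at hlim
        exact tendsto_nhds_unique hlim tendsto_const_nhds
      exact hdet F hFint hall
    -- conclude z = 0
    have hzW' : ∀ᵐ γ ∂ν, (∀ φ ∈ A, (𝓕 φ) γ = 0) → (𝓕 z) γ = 0 := hzW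
    have hzero : ∀ᵐ γ ∂ν, (𝓕 z) γ = 0 := by
      have h1 : ∀ᵐ γ ∂ν, ∀ φ ∈ A, conj ((𝓕 φ) γ) * (𝓕 z) γ = 0 :=
        (ae_ball_iff hA).2 fun φ hφ => (hkey φ hφ).mono fun γ h => by simp only [Pi.zero_apply] at h; exact h
      filter_upwards [h1, hzW'] with γ h2 h3
      by_cases hc : ∀ φ ∈ A, (𝓕 φ) γ = 0
      · exact h3 hc
      · push_neg at hc
        obtain ⟨φ, hφ, hne⟩ := hc
        rcases mul_eq_zero.1 (h2 φ hφ) with h | h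
        · exact absurd (by simpa using h) hne
        · exact h
    have hFz : 𝓕 z = 0 := Lp.eq_zero_iff_ae_eq_zero.2 hzero
    have hz0 : z = 0 := by
      have := congrArg 𝓕.symm hFz
      simpa using this
    rw [hz0, add_zero]
    exact hy
  -- main characterisation
  have hmain : ∀ f : Lp ℂ 2 μ, f ∈ V ↔
      ∀ᵐ γ ∂ν, (∀ φ ∈ A, (𝓕 φ) γ = 0) → (𝓕 f) γ = 0 := by
    intro f
    rw [← hWmem]
    exact ⟨fun h => hVW h, fun h => hWV f h⟩
  refine ⟨?_, hmain⟩
  intro x f hf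
  rw [hmain] at hf ⊢
  filter_upwards [hf, h𝓕 x f] with γ h1 h2 hz
  rw [h2, h1 hz, mul_zero]
end
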